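/- arXiv:1910.11839 — 6 statements merged into one kernel-verified Lean document; each statement's English description precedes it below -/
import Mathlib

section
/- Let θ ∈ ℝ, let w ∈ ℂ with |w| = 1, and let n be a nonzero integer. If g ∈ L²(𝕋, m) satisfies g(e^{iθ}·z)·w·zⁿ = g(z) for m-almost every z ∈ 𝕋, then g = 0 m-almost everywhere. (This is the key step showing that for f(z) = z₀·z the cohomological equation of the Anzai skew-product has no nonzero square-integrable solutions, for any deformation parameter.) -/
open MeasureTheory Filter

noncomputable instance : MeasurableSpace Circle := borel Circle
instance : BorelSpace Circle := ⟨rfl⟩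

/-- The normalized Haar (Lebesgue) probability measure `m` on the unit circle `𝕋`. -/
noncomputable def haarCircle : Measure Circle := Measure.haarMeasure ⊤

open Real AddCircle

namespace Anzai
local instance fact2pi : Fact (0 < 2 * π) := ⟨by positivity⟩

noncomputable def e : AddCircle (2 * π) ≃ᵐ Circle :=
  (homeomorphCircle (by positivity : (2*π:ℝ) ≠ 0)).toMeasurableEquiv

lemma e_eq (x : AddCircle (2 * π)) : e x = toCircle x :=
  homeomorphCircle_apply _ x

lemma e_add (x y : AddCircle (2 * π)) : e (x + y) = e x * e y := by
  simp [e_eq, toCircle_add]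

noncomputable abbrev ν : Measure (AddCircle (2 * π)) := haarAddCircle

instance : (Measure.map (e) ν).IsHaarMeasure where
  map_mul_left_eq_self := by
    intro c
    have hc : c = e (e.symm c) := (e.apply_symm_apply c).symm
    rw [Measure.map_map (measurable_const_mul c) e.measurable]
    have : (c * ·) ∘ e = e ∘ (e.symm c + ·) := by
      funext x
      simp only [Function.comp_apply, e_add]
      rw [← hc]
    rw [this, ← Measure.map_map e.measurable (measurable_const_add _),
      (measurePreserving_add_left ν _).map_eq]
  lt_top_of_isCompact := by
    have : IsProbabilityMeasure (Measure.map (e) ν) :=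
      Measure.isProbabilityMeasure_map e.measurable.aemeasurable
    intro K _
    exact (measure_lt_top _ K)
  open_pos := by
    intro U hU hne
    rw [e.map_apply]
    have : (e ⁻¹' U).Nonempty := ⟨e.symm hne.choose, by simp [hne.choose_spec]⟩
    exact (hU.preimage (homeomorphCircle _).continuous).measure_ne_zero ν this

instance : IsProbabilityMeasure (Measure.map (e) ν) :=
  Measure.isProbabilityMeasure_map e.measurable.aemeasurable

instance : haarCircle.IsHaarMeasure := Measure.isHaarMeasure_haarMeasure ⊤
instance : IsProbabilityMeasure haarCircle := ⟨Measure.haarMeasure_self⟩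

lemma map_e : Measure.map (e) ν = haarCircle :=
  Measure.isHaarMeasure_eq_of_isProbabilityMeasure _ _

lemma mp_e : MeasurePreserving (e) ν haarCircle := ⟨e.measurable, map_e⟩

end Anzai

namespace Anzai

lemma toCircle_zsmul (m : ℤ) (x : AddCircle (2 * π)) :
    toCircle (m • x) = toCircle x ^ m := by
  let f : Multiplicative (AddCircle (2 * π)) →* Circle :=
    { toFun := fun y => toCircle y.toAdd
      map_one' := toCircle_zero
      map_mul' := fun a b => toCircle_add _ _ }
  simpa [f] using map_zpow f (Multiplicative.ofAdd x) m

lemma fourier_apply_add (m : ℤ) (x y : AddCircle (2 * π)) :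
    (fourier m (x + y) : ℂ) = fourier m x * fourier m y := by
  simp only [fourier_apply, smul_add, toCircle_add, Circle.coe_mul]

lemma norm_fourier (m : ℤ) (x : AddCircle (2 * π)) : ‖(fourier m x : ℂ)‖ = 1 := by
  rw [fourier_apply, Circle.norm_coe]

end Anzai

open Anzai in
/-- For `f(z) = z₀ z` the cohomological equation of the Anzai skew-product has no nonzero
square-integrable solutions: if `g ∈ L²(𝕋, m)` satisfies `g(e^{iθ}z)·w·zⁿ = g(z)` a.e. for some
unimodular `w` and nonzero integer `n`, then `g = 0` a.e. -/
theorem stmt1 (θ : ℝ) (w : ℂ) (hw : ‖w‖ = 1) (n : ℤ) (hn : n ≠ 0)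
    (g : Circle → ℂ) (hg : MemLp g 2 haarCircle)
    (hcoh : ∀ᵐ z ∂haarCircle, g (Circle.exp θ * z) * w * (z : ℂ) ^ n = g z) :
    g =ᵐ[haarCircle] 0 := by
  haveI : Fact (0 < 2 * π) := ⟨by positivity⟩
  set a : AddCircle (2 * π) := e.symm (Circle.exp θ) with ha
  have hea : (e a : Circle) = Circle.exp θ := e.apply_symm_apply _
  set G : AddCircle (2 * π) → ℂ := fun x => g (e x) with hGdef
  have hGm : MemLp G 2 ν := hg.comp_measurePreserving mp_e
  -- transfer the cohomological equation
  have hmapae : Filter.map (e) (ae ν) = ae haarCircle := by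
    rw [MeasurableEquiv.map_ae, map_e]
  have hrel : ∀ᵐ x ∂ν, G (a + x) * w * (fourier n x) = G x := by
    rw [← hmapae] at hcoh
    refine (Filter.eventually_map.1 hcoh).mono fun x hx => ?_
    have h1 : Circle.exp θ * e x = e (a + x) := by rw [e_add, hea]
    have h2 : ((e x : ℂ)) ^ n = fourier n x := by
      rw [fourier_apply, e_eq, Anzai.toCircle_zsmul]
      exact (map_zpow Circle.coeHom _ n).symm
    simpa only [h1, h2] using hx
  set c : ℤ → ℂ := fun k => fourierCoeff G k with hc
  -- the recurrence
  have hrec : ∀ k : ℤ, c k = w * fourier (n - k) (-a) * c (k - n) := by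
    intro k
    have e1 : c k = ∫ x, w * (fourier (n - k) x * G (a + x)) ∂ν := by
      rw [hc]
      simp only [fourierCoeff]
      refine integral_congr_ae (hrel.mono fun x hx => ?_)
      simp only [smul_eq_mul]
      rw [← hx, sub_eq_add_neg n k, fourier_add]
      ring
    have e2 : ∫ x, fourier (n - k) x * G (a + x) ∂ν
        = ∫ x, (fun y => (fourier (n - k) (y - a) : ℂ) * G y) (a + x) ∂ν := by
      congr 1
      funext x
      simp [add_sub_cancel_left]
    have e3 : ∫ y, (fourier (n - k) (y - a) : ℂ) * G y ∂ν
        = fourier (n - k) (-a) * ∫ y, (fourier (n - k) y : ℂ) * G y ∂ν := by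
      rw [← integral_const_mul]
      congr 1
      funext y
      rw [sub_eq_add_neg y a, fourier_apply_add]
      ring
    have e4 : ∫ y, (fourier (n - k) y : ℂ) * G y ∂ν = c (k - n) := by
      rw [hc]
      simp only [fourierCoeff, smul_eq_mul, neg_sub]
    have e5 := integral_add_left_eq_self (μ := ν)
      (fun y => (fourier (n - k) (y - a) : ℂ) * G y) a
    rw [e1]
    simp only [integral_const_mul]
    rw [e2, e5, e3, e4]
    ring
  have hnorm : ∀ k : ℤ, ‖c k‖ = ‖c (k - n)‖ := by
    intro k
    rw [hrec k, norm_mul, norm_mul, hw, norm_fourier, one_mul, one_mul]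
  have hiter : ∀ (k : ℤ) (j : ℕ), ‖c (k + j * n)‖ = ‖c k‖ := by
    intro k j
    induction j with
    | zero => simp
    | succ j ih =>
      have h := hnorm (k + (j + 1 : ℕ) * n)
      rw [show (k + ((j : ℕ) + 1 : ℕ) * n) - n = k + (j : ℕ) * n by push_cast; ring] at h
      rw [h, ih]
  -- summability via Parseval
  have hcoeff : ∀ k : ℤ, fourierBasis.repr (hGm.toLp G) k = c k := by
    intro k
    rw [fourierBasis_repr, hc]
    simp only [fourierCoeff]
    refine integral_congr_ae ((hGm.coeFn_toLp).mono fun x hx => ?_)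
    simp only [hx]
  have hsum : Summable fun k : ℤ => ‖c k‖ ^ (2 : ℝ) := by
    have h2 := lp.memℓp (fourierBasis.repr (hGm.toLp G))
    rw [memℓp_gen_iff (by norm_num)] at h2
    simpa [hcoeff] using h2
  have hzero : ∀ k : ℤ, c k = 0 := by
    intro k
    have hinj : Function.Injective fun j : ℕ => k + (j : ℤ) * n := by
      intro i j hij
      simp only at hij
      have : (i : ℤ) * n = j * n := by linarith [hij]
      exact_mod_cast mul_right_cancel₀ hn this
    have hs2 : Summable fun j : ℕ => ‖c (k + (j : ℤ) * n)‖ ^ (2 : ℝ) :=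
      hsum.comp_injective hinj
    have hs3 : Summable fun _ : ℕ => ‖c k‖ ^ (2 : ℝ) := by
      refine hs2.congr fun j => ?_
      rw [hiter k j]
    have h0 : ‖c k‖ ^ (2 : ℝ) = 0 := by
      by_contra h
      exact h (tendsto_nhds_unique tendsto_const_nhds hs3.tendsto_atTop_zero)
    have : ‖c k‖ = 0 := by
      have := (Real.rpow_eq_zero (norm_nonneg _) (by norm_num)).1 h0
      exact this
    simpa using this
  -- conclude f = 0
  have hrepr0 : fourierBasis.repr (hGm.toLp G) = 0 := by
    ext k
    rw [hcoeff k, hzero k]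
    rfl
  have hf0 : hGm.toLp G = 0 := by
    have := fourierBasis.repr.map_eq_zero_iff.1 hrepr0
    exact this
  have hG0 : G =ᵐ[ν] 0 := by
    refine (hGm.coeFn_toLp).symm.trans ?_
    rw [hf0]
    exact Lp.coeFn_zero ℂ 2 ν
  rw [Filter.EventuallyEq, ← hmapae]
  rw [Filter.eventually_map]
  exact hG0.mono fun x hx => hx
end

section
/- Let X₀ be a nonempty compact Hausdorff space, let T₀ : X₀ → X₀ be a homeomorphism such that (X₀, T₀) is uniquely ergodic with unique invariant measure μ₀, let f : X₀ → 𝕋 be continuous, let T be the associated skew product on X₀ × 𝕋, and let μ = μ₀ × m. If T is ergodic with respect to μ, then T is uniquely ergodic: μ is the only T-invariant Radon probability measure on X₀ × 𝕋. -/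
open MeasureTheory Filter

open scoped ENNReal NNReal

instance : IsProbabilityMeasure haarCircle := by
  constructor
  rw [show (Set.univ : Set Circle) = ((⊤ : TopologicalSpace.PositiveCompacts Circle) : Set Circle) from rfl]
  exact Measure.haarMeasure_self

instance : haarCircle.Regular := Measure.regular_haarMeasure
instance : haarCircle.IsMulLeftInvariant := Measure.isMulLeftInvariant_haarMeasure _

-- ext lemma via regularity and Urysohn
lemma ext_aux {Y : Type*} [TopologicalSpace Y] [CompactSpace Y] [T2Space Y]
    [MeasurableSpace Y] [BorelSpace Y]
    (ν μ : Measure Y) [IsFiniteMeasure ν] [IsFiniteMeasure μ]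
    (hνr : ν.Regular) (hμr : μ.Regular)
    (h : ∀ g : C(Y, ℝ), (∀ y, g y ∈ Set.Icc (0:ℝ) 1) →
      ∫⁻ y, ENNReal.ofReal (g y) ∂ν = ∫⁻ y, ENNReal.ofReal (g y) ∂μ) :
    ν = μ := by
  have key : ∀ (ρ σ : Measure Y), σ.Regular →
      (∀ g : C(Y, ℝ), (∀ y, g y ∈ Set.Icc (0:ℝ) 1) →
        ∫⁻ y, ENNReal.ofReal (g y) ∂ρ = ∫⁻ y, ENNReal.ofReal (g y) ∂σ) →
      ∀ K : Set Y, IsCompact K → ρ K ≤ σ K := by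
    intro ρ σ hσr hgs K hK
    have step : ∀ U : Set Y, IsOpen U → K ⊆ U → ρ K ≤ σ U := by
      intro U hU hKU
      obtain ⟨g, hg1, hg0, hgp⟩ := exists_continuous_one_zero_of_isCompact hK
        hU.isClosed_compl (Set.disjoint_left.mpr fun x hxK hxU => hxU (hKU hxK))
      have h1 : ρ K ≤ ∫⁻ y, ENNReal.ofReal (g y) ∂ρ := by
        rw [← lintegral_indicator_one hK.measurableSet]
        refine lintegral_mono fun y => ?_
        by_cases hy : y ∈ K
        · simp [Set.indicator_of_mem hy, hg1 hy]
        · simp [Set.indicator_of_notMem hy]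
      have h2 : ∫⁻ y, ENNReal.ofReal (g y) ∂σ ≤ σ U := by
        rw [← lintegral_indicator_one hU.measurableSet]
        refine lintegral_mono fun y => ?_
        by_cases hy : y ∈ U
        · simp only [Set.indicator_of_mem hy]
          exact ENNReal.ofReal_le_one.mpr (hgp.2 y).2
        · have : g y = 0 := hg0 hy
          simp [this]
      calc ρ K ≤ _ := h1
        _ = _ := hgs g hgp.2
        _ ≤ σ U := h2
    have : σ.OuterRegular := hσr.toOuterRegular
    conv_rhs => rw [Set.measure_eq_iInf_isOpen]
    exact le_iInf₂ fun U hKU => le_iInf fun hU => step U hU hKU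
  have hcomp : ∀ K : Set Y, IsCompact K → ν K = μ K := fun K hK =>
    le_antisymm (key ν μ hμr h K hK) (key μ ν hνr (fun g hg => (h g hg).symm) K hK)
  ext A hA
  have := hνr
  have := hμr
  rw [hA.measure_eq_iSup_isCompact_of_ne_top (measure_ne_top ν A),
    hA.measure_eq_iSup_isCompact_of_ne_top (measure_ne_top μ A)]
  exact iSup_congr fun K => iSup_congr fun hKA => iSup_congr fun hK => hcomp K hK

lemma regular_map_fst {A B : Type*} [TopologicalSpace A] [TopologicalSpace B]
    [CompactSpace A] [CompactSpace B] [T2Space A] [T2Space B]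
    [MeasurableSpace A] [MeasurableSpace B] [BorelSpace A] [BorelSpace B]
    [SecondCountableTopology B]
    (ν : Measure (A × B)) [IsFiniteMeasure ν] (hν : ν.Regular) :
    (ν.map Prod.fst).Regular := by
  have hmf : Measurable (Prod.fst : A × B → A) := measurable_fst
  refine { lt_top_of_isCompact := fun _ _ => measure_lt_top _ _,
           outerRegular := ?outer, innerRegular := ?inner }
  case inner =>
    intro U hU r hr
    rw [Measure.map_apply hmf hU.measurableSet] at hr
    obtain ⟨K, hKU, hKc, hrK⟩ := hν.innerRegular (hU.preimage continuous_fst) r hr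
    refine ⟨Prod.fst '' K, ?_, hKc.image continuous_fst, ?_⟩
    · rintro x ⟨p, hp, rfl⟩
      exact hKU hp
    · rw [Measure.map_apply hmf ((hKc.image continuous_fst).isClosed.measurableSet)]
      exact hrK.trans_le (measure_mono fun p hp => Set.mem_preimage.mpr ⟨p, hp, rfl⟩)
  case outer =>
    intro S hS r hr
    rw [Measure.map_apply hmf hS] at hr
    obtain ⟨U, hSU, hUo, hUr⟩ := Set.exists_isOpen_lt_of_lt _ r hr
    have hcl : IsClosed (Prod.fst '' Uᶜ) :=
      ((hUo.isClosed_compl.isCompact).image continuous_fst).isClosed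
    refine ⟨(Prod.fst '' Uᶜ)ᶜ, ?_, hcl.isOpen_compl, ?_⟩
    · intro x hx
      rintro ⟨p, hp, rfl⟩
      exact hp (hSU (Set.mem_preimage.mpr hx))
    · rw [Measure.map_apply hmf hcl.isOpen_compl.measurableSet]
      refine (measure_mono ?_).trans_lt hUr
      intro p hp
      by_contra hpU
      exact hp ⟨p, hpU, rfl⟩

lemma ergodic_smul_aux {α : Type*} [MeasurableSpace α] (S : α ≃ᵐ α) (μ lam : Measure α)
    [IsProbabilityMeasure μ] [IsFiniteMeasure lam]
    (herg : Ergodic S μ) (hinv : lam.map S = lam) (hac : lam ≪ μ) :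
    lam = (lam Set.univ) • μ := by
  have hμinv : μ.map S = μ := herg.toMeasurePreserving.map_eq
  set g : α → ℝ≥0∞ := lam.rnDeriv μ with hg
  have hgm : Measurable g := Measure.measurable_rnDeriv lam μ
  have hwd : μ.withDensity g = lam := Measure.withDensity_rnDeriv_eq lam μ hac
  -- pushforward of withDensity along the equiv
  have hmap : (μ.withDensity g).map S = μ.withDensity (g ∘ S.symm) := by
    ext A hA
    rw [Measure.map_apply S.measurable hA, withDensity_apply _ (S.measurable hA),
      withDensity_apply _ hA]
    calc ∫⁻ x in S ⁻¹' A, g x ∂μ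
        = ∫⁻ x in S ⁻¹' A, g (S.symm (S x)) ∂μ := by
          refine setLIntegral_congr_fun (S.measurable hA) ?_
          intro x _
          simp only [S.symm_apply_apply]
      _ = ∫⁻ y in A, g (S.symm y) ∂(μ.map S) :=
          (setLIntegral_map hA (hgm.comp S.symm.measurable) S.measurable).symm
      _ = ∫⁻ y in A, (g ∘ S.symm) y ∂μ := by rw [hμinv]; rfl
  have heq : μ.withDensity (g ∘ S.symm) = μ.withDensity g := by
    rw [← hmap, hwd, hinv]
  have hae : (g ∘ S.symm) =ᵐ[μ] g := by
    rwa [withDensity_eq_iff_of_sigmaFinite (hgm.comp S.symm.measurable).aemeasurable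
      hgm.aemeasurable] at heq
  have hae' : (g ∘ S) =ᵐ[μ] g := by
    have hcomp := herg.toMeasurePreserving.quasiMeasurePreserving.ae_eq_comp hae
    have hgs : (g ∘ ⇑S.symm) ∘ ⇑S = g := by
      funext x; simp
    rw [hgs] at hcomp
    exact hcomp.symm
  obtain ⟨c, hc⟩ := herg.ae_eq_const_of_ae_eq_comp₀ hgm.nullMeasurable hae'
  have : lam = c • μ := by
    rw [← hwd, withDensity_congr_ae hc,
      show Function.const α c = fun _ : α => c from rfl, withDensity_const]
  rw [this]
  congr 1
  simp [Measure.smul_apply, smul_eq_mul]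

lemma prod_regular {A B : Type*} [TopologicalSpace A] [TopologicalSpace B]
    [CompactSpace A] [CompactSpace B] [T2Space A] [T2Space B]
    [MeasurableSpace A] [MeasurableSpace B] [BorelSpace A] [BorelSpace B]
    [SecondCountableTopology B]
    (μ : Measure A) (m : Measure B) [IsProbabilityMeasure μ] [IsProbabilityMeasure m]
    (hμ : μ.Regular) (hm : m.Regular) : (μ.prod m).Regular := by
  set ρ := μ.prod m with hρ
  have hq : ∀ ε : ℝ≥0∞, ε / 2 / 2 + ε / 2 / 2 = ε / 2 := fun ε => ENNReal.add_halves _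
  have main : ∀ ⦃S : Set (A × B)⦄, MeasurableSet S → ∀ ε : ℝ≥0∞, ε ≠ 0 →
      ∃ K U : Set (A × B), IsCompact K ∧ IsOpen U ∧ K ⊆ S ∧ S ⊆ U ∧ ρ (U \ K) ≤ ε := by
    refine MeasurableSpace.induction_on_inter generateFrom_prod.symm isPiSystem_prod ?_ ?_ ?_ ?_
    · -- empty set
      intro ε hε
      exact ⟨∅, ∅, isCompact_empty, isOpen_empty, subset_rfl, subset_rfl, by simp⟩
    · -- rectangles
      rintro _ ⟨s, hs, t, ht, rfl⟩ ε hε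
      have hε4 : ε / 2 / 2 ≠ 0 := by simp [hε]
      obtain ⟨K₁, hK₁s, hK₁c, hK₁⟩ := (hs : MeasurableSet s).exists_isCompact_diff_lt
        (measure_ne_top μ s) hε4
      obtain ⟨U₁, hsU₁, hU₁o, hU₁⟩ := (hs : MeasurableSet s).exists_isOpen_diff_lt
        (measure_ne_top μ s) hε4
      obtain ⟨K₂, hK₂t, hK₂c, hK₂⟩ := (ht : MeasurableSet t).exists_isCompact_diff_lt
        (measure_ne_top m t) hε4
      obtain ⟨U₂, htU₂, hU₂o, hU₂⟩ := (ht : MeasurableSet t).exists_isOpen_diff_lt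
        (measure_ne_top m t) hε4
      refine ⟨K₁ ×ˢ K₂, U₁ ×ˢ U₂, hK₁c.prod hK₂c, hU₁o.prod hU₂o,
        Set.prod_mono hK₁s hK₂t, Set.prod_mono hsU₁ htU₂, ?_⟩
      have hsub : (U₁ ×ˢ U₂) \ (K₁ ×ˢ K₂) ⊆ ((U₁ \ K₁) ×ˢ U₂) ∪ (U₁ ×ˢ (U₂ \ K₂)) := by
        rintro ⟨a, b⟩ ⟨⟨ha, hb⟩, hab⟩
        by_cases haK : a ∈ K₁
        · exact Or.inr ⟨ha, hb, fun hbK => hab ⟨haK, hbK⟩⟩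
        · exact Or.inl ⟨⟨ha, haK⟩, hb⟩
      have h1 : μ (U₁ \ K₁) ≤ ε / 2 := by
        rw [← hq ε]
        calc μ (U₁ \ K₁) ≤ μ ((U₁ \ s) ∪ (s \ K₁)) := measure_mono (fun a ⟨ha, haK⟩ => by
              by_cases has : a ∈ s
              · exact Or.inr ⟨has, haK⟩
              · exact Or.inl ⟨ha, has⟩)
          _ ≤ μ (U₁ \ s) + μ (s \ K₁) := measure_union_le _ _
          _ ≤ ε / 2 / 2 + ε / 2 / 2 := add_le_add hU₁.2.le hK₁.le
      have h2 : m (U₂ \ K₂) ≤ ε / 2 := by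
        rw [← hq ε]
        calc m (U₂ \ K₂) ≤ m ((U₂ \ t) ∪ (t \ K₂)) := measure_mono (fun b ⟨hb, hbK⟩ => by
              by_cases hbt : b ∈ t
              · exact Or.inr ⟨hbt, hbK⟩
              · exact Or.inl ⟨hb, hbt⟩)
          _ ≤ m (U₂ \ t) + m (t \ K₂) := measure_union_le _ _
          _ ≤ ε / 2 / 2 + ε / 2 / 2 := add_le_add hU₂.2.le hK₂.le
      calc ρ ((U₁ ×ˢ U₂) \ (K₁ ×ˢ K₂)) ≤ ρ (((U₁ \ K₁) ×ˢ U₂) ∪ (U₁ ×ˢ (U₂ \ K₂))) :=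
            measure_mono hsub
        _ ≤ ρ ((U₁ \ K₁) ×ˢ U₂) + ρ (U₁ ×ˢ (U₂ \ K₂)) := measure_union_le _ _
        _ = μ (U₁ \ K₁) * m U₂ + μ U₁ * m (U₂ \ K₂) := by
            rw [hρ, Measure.prod_prod, Measure.prod_prod]
        _ ≤ (ε / 2) * 1 + 1 * (ε / 2) :=
            add_le_add (mul_le_mul' h1 prob_le_one) (mul_le_mul' prob_le_one h2)
        _ = ε := by rw [mul_one, one_mul, ENNReal.add_halves]
    · -- complement
      intro S hS ih ε hε
      obtain ⟨K, U, hKc, hUo, hKS, hSU, hres⟩ := ih ε hε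
      refine ⟨Uᶜ, Kᶜ, hUo.isClosed_compl.isCompact, hKc.isClosed.isOpen_compl,
        Set.compl_subset_compl.mpr hSU, Set.compl_subset_compl.mpr hKS, ?_⟩
      have heq : Kᶜ \ Uᶜ = U \ K := by
        ext p; simp only [Set.mem_diff, Set.mem_compl_iff, not_not]; tauto
      rwa [heq]
    · -- countable disjoint union
      intro g _hdisj hmeas ih ε hε
      have hε2 : (ε / 2) ≠ 0 := by simp [hε]
      obtain ⟨δ, hδpos, hδsum⟩ := ENNReal.exists_pos_sum_of_countable' hε2 ℕ
      choose K U hKc hUo hKg hgU hres using fun n => ih n (δ n) (hδpos n).ne'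
      have hKmeas : ∀ n, MeasurableSet (K n) := fun n => (hKc n).isClosed.measurableSet
      have hUKsum : ρ ((⋃ n, U n) \ ⋃ n, K n) ≤ ε / 2 := by
        calc ρ ((⋃ n, U n) \ ⋃ n, K n) ≤ ρ (⋃ n, (U n \ K n)) := measure_mono (by
              rintro p ⟨hpU, hpK⟩
              obtain ⟨n, hn⟩ := Set.mem_iUnion.mp hpU
              exact Set.mem_iUnion.mpr ⟨n, hn, fun h => hpK (Set.mem_iUnion.mpr ⟨n, h⟩)⟩)
          _ ≤ ∑' n, ρ (U n \ K n) := measure_iUnion_le _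
          _ ≤ ∑' n, δ n := ENNReal.tsum_le_tsum hres
          _ ≤ ε / 2 := hδsum.le
      -- choose a finite stage
      have hacc_mono : Monotone fun N => Set.accumulate K N := Set.monotone_accumulate
      have hacc_meas : ∀ N, MeasurableSet (Set.accumulate K N) := fun N =>
        MeasurableSet.biUnion (Set.to_countable _) fun n _ => hKmeas n
      have hsup : ρ (⋃ n, K n) = ⨆ N, ρ (Set.accumulate K N) := by
        rw [← Set.iUnion_accumulate]
        exact hacc_mono.directed_le.measure_iUnion
      obtain ⟨N, hN⟩ : ∃ N, ρ ((⋃ n, K n) \ Set.accumulate K N) ≤ ε / 2 := by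
        by_cases hc : ρ (⋃ n, K n) ≤ ε / 2
        · exact ⟨0, (measure_mono Set.diff_subset).trans hc⟩
        · push_neg at hc
          have hne : ρ (⋃ n, K n) ≠ 0 := (lt_of_le_of_lt zero_le hc).ne'
          have hlt : ρ (⋃ n, K n) - ε / 2 < ρ (⋃ n, K n) :=
            ENNReal.sub_lt_self (measure_ne_top _ _) hne hε2
          rw [hsup] at hlt
          obtain ⟨N, hN⟩ := lt_iSup_iff.mp hlt
          rw [← hsup] at hN
          refine ⟨N, ?_⟩
          have hsub' : Set.accumulate K N ⊆ ⋃ n, K n := by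
            rw [← Set.iUnion_accumulate]; exact Set.subset_iUnion _ N
          rw [measure_diff hsub' (hacc_meas N).nullMeasurableSet (measure_ne_top _ _)]
          exact tsub_le_iff_right.mpr (tsub_le_iff_left.mp hN.le)
      refine ⟨Set.accumulate K N, ⋃ n, U n, ?_, isOpen_iUnion hUo, ?_, ?_, ?_⟩
      · rw [Set.accumulate_def]
        exact (Set.finite_Iic N).isCompact_biUnion fun n _ => hKc n
      · rw [Set.accumulate_def]
        exact Set.iUnion₂_subset fun n _ => (hKg n).trans (Set.subset_iUnion g n)
      · exact Set.iUnion_mono hgU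
      · calc ρ ((⋃ n, U n) \ Set.accumulate K N)
            ≤ ρ (((⋃ n, U n) \ ⋃ n, K n) ∪ ((⋃ n, K n) \ Set.accumulate K N)) :=
              measure_mono (fun p ⟨hpU, hpK⟩ => by
                by_cases hK' : p ∈ ⋃ n, K n
                · exact Or.inr ⟨hK', hpK⟩
                · exact Or.inl ⟨hpU, hK'⟩)
          _ ≤ _ + _ := measure_union_le _ _
          _ ≤ ε / 2 + ε / 2 := add_le_add hUKsum hN
          _ = ε := ENNReal.add_halves ε
  -- derive Regular from `main`
  refine { lt_top_of_isCompact := fun _ _ => measure_lt_top _ _,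
           outerRegular := ?outer, innerRegular := ?inner }
  case inner =>
    intro V hV r hr
    have hVt : ρ V ≠ ⊤ := measure_ne_top ρ V
    have hsubne : ρ V - r ≠ 0 := fun h => absurd (tsub_eq_zero_iff_le.mp h) (not_le.mpr hr)
    have hεne : (ρ V - r) / 2 ≠ 0 := by
      simp only [ne_eq, ENNReal.div_eq_zero_iff, not_or]
      exact ⟨hsubne, by norm_num⟩
    obtain ⟨K, U, hKc, hUo, hKV, hVU, hres⟩ := main hV.measurableSet ((ρ V - r) / 2) hεne
    refine ⟨K, hKV, hKc, ?_⟩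
    by_contra hKr
    push_neg at hKr
    have h1 : ρ V ≤ ρ K + (ρ V - r) / 2 := by
      calc ρ V ≤ ρ (K ∪ (U \ K)) := measure_mono (fun p hp => by
            by_cases hpK : p ∈ K
            · exact Or.inl hpK
            · exact Or.inr ⟨hVU hp, hpK⟩)
        _ ≤ ρ K + ρ (U \ K) := measure_union_le _ _
        _ ≤ ρ K + (ρ V - r) / 2 := add_le_add_right hres _
    have h2 : ρ V ≤ r + (ρ V - r) / 2 := h1.trans (add_le_add_left hKr _)
    have h3 : r + (ρ V - r) / 2 < r + (ρ V - r) :=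
      ENNReal.add_lt_add_left (hr.trans (measure_lt_top ρ V)).ne
        (ENNReal.half_lt_self hsubne (ENNReal.sub_ne_top hVt))
    have h4 : r + (ρ V - r) = ρ V := add_tsub_cancel_of_le hr.le
    exact absurd (h2.trans_lt (h3.trans_eq h4)) (lt_irrefl _)
  case outer =>
    intro S hS r hr
    by_cases hrt : r = ⊤
    · exact ⟨Set.univ, Set.subset_univ _, isOpen_univ, hrt ▸ measure_lt_top ρ _⟩
    · have hsubne : r - ρ S ≠ 0 := fun h => absurd (tsub_eq_zero_iff_le.mp h) (not_le.mpr hr)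
      have hεne : (r - ρ S) / 2 ≠ 0 := by
        simp only [ne_eq, ENNReal.div_eq_zero_iff, not_or]
        exact ⟨hsubne, by norm_num⟩
      obtain ⟨K, U, hKc, hUo, hKS, hSU, hres⟩ := main hS ((r - ρ S) / 2) hεne
      refine ⟨U, hSU, hUo, ?_⟩
      calc ρ U ≤ ρ (S ∪ (U \ K)) := measure_mono (fun p hp => by
            by_cases hpS : p ∈ S
            · exact Or.inl hpS
            · exact Or.inr ⟨hp, fun hpK => hpS (hKS hpK)⟩)
        _ ≤ ρ S + ρ (U \ K) := measure_union_le _ _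
        _ ≤ ρ S + (r - ρ S) / 2 := add_le_add_right hres _
        _ < ρ S + (r - ρ S) := ENNReal.add_lt_add_left (measure_ne_top ρ S)
            (ENNReal.half_lt_self hsubne (ENNReal.sub_ne_top hrt))
        _ = r := add_tsub_cancel_of_le hr.le

/-- For a uniquely ergodic base `(X₀, T₀, μ₀)` and continuous `f : X₀ → 𝕋`, if the skew product
`T(x,z) = (T₀ x, f(x) z)` is ergodic with respect to `μ = μ₀ × m`, then it is uniquely ergodic:
`μ` is the only `T`-invariant Radon probability measure. -/
theorem stmt5 {X₀ : Type*} [TopologicalSpace X₀] [CompactSpace X₀] [T2Space X₀] [Nonempty X₀]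
    [MeasurableSpace X₀] [BorelSpace X₀]
    (T₀ : X₀ ≃ₜ X₀) (μ₀ : Measure X₀) [IsProbabilityMeasure μ₀] [μ₀.Regular]
    (hμ₀ : Measure.map T₀ μ₀ = μ₀)
    (huniq : ∀ ν : Measure X₀, IsProbabilityMeasure ν → ν.Regular →
      Measure.map T₀ ν = ν → ν = μ₀)
    (f : X₀ → Circle) (hf : Continuous f)
    (herg : Ergodic (fun p : X₀ × Circle => (T₀ p.1, f p.1 * p.2)) (μ₀.prod haarCircle)) :
    ∀ ν : Measure (X₀ × Circle), IsProbabilityMeasure ν → ν.Regular →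
      Measure.map (fun p : X₀ × Circle => (T₀ p.1, f p.1 * p.2)) ν = ν →
      ν = μ₀.prod haarCircle := by
  intro ν hνp hνr hνinv
  -- the skew product as a homeomorphism / measurable equivalence
  let Th : (X₀ × Circle) ≃ₜ (X₀ × Circle) :=
    { toFun := fun p => (T₀ p.1, f p.1 * p.2)
      invFun := fun q => (T₀.symm q.1, (f (T₀.symm q.1))⁻¹ * q.2)
      left_inv := fun p => by simp
      right_inv := fun q => by simp
      continuous_toFun := (T₀.continuous.comp continuous_fst).prodMk
        ((hf.comp continuous_fst).mul continuous_snd)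
      continuous_invFun := (T₀.symm.continuous.comp continuous_fst).prodMk
        (((hf.comp (T₀.symm.continuous.comp continuous_fst)).inv).mul continuous_snd) }
  let e : (X₀ × Circle) ≃ᵐ (X₀ × Circle) := Th.toMeasurableEquiv
  have hecoe : ⇑e = fun p : X₀ × Circle => (T₀ p.1, f p.1 * p.2) := rfl
  have hTm : Measurable (fun p : X₀ × Circle => (T₀ p.1, f p.1 * p.2)) := e.measurable
  have herg' : Ergodic (⇑e) (μ₀.prod haarCircle) := herg
  -- the first marginal of ν is μ₀
  set ν₀ := ν.map Prod.fst with hν₀def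
  have hν₀p : IsProbabilityMeasure ν₀ := Measure.isProbabilityMeasure_map measurable_fst.aemeasurable
  have hν₀reg : ν₀.Regular := regular_map_fst ν hνr
  have hν₀inv : Measure.map T₀ ν₀ = ν₀ := by
    rw [hν₀def, Measure.map_map T₀.continuous.measurable measurable_fst]
    have hcm : (⇑T₀ ∘ Prod.fst) =
        (Prod.fst ∘ fun p : X₀ × Circle => (T₀ p.1, f p.1 * p.2)) := rfl
    rw [hcm, ← Measure.map_map measurable_fst hTm, hνinv]
  have hν₀ : ν₀ = μ₀ := huniq ν₀ hν₀p hν₀reg hν₀inv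
  -- rotation-averaging map
  set π : Circle × (X₀ × Circle) → X₀ × Circle := fun q => (q.2.1, q.1 * q.2.2) with hπdef
  have hπc : Continuous π := (continuous_fst.comp continuous_snd).prodMk
    (continuous_fst.mul (continuous_snd.comp continuous_snd))
  have hπm : Measurable π := hπc.measurable
  -- Fubini: the full rotation average of ν is ν₀ × haar
  have key1 : (haarCircle.prod ν).map π = ν₀.prod haarCircle := by
    ext A hA
    rw [Measure.map_apply hπm hA, Measure.prod_apply (hπm hA), Measure.prod_apply hA]
    calc ∫⁻ w, ν (Prod.mk w ⁻¹' (π ⁻¹' A)) ∂haarCircle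
        = ∫⁻ w, ∫⁻ p, (π ⁻¹' A).indicator 1 (w, p) ∂ν ∂haarCircle := by
          refine lintegral_congr fun w => ?_
          rw [← lintegral_indicator_one (measurable_prodMk_left (hπm hA))]
          exact lintegral_congr fun p => rfl
      _ = ∫⁻ p, ∫⁻ w, (π ⁻¹' A).indicator 1 (w, p) ∂haarCircle ∂ν :=
          lintegral_lintegral_swap ((measurable_one.indicator (hπm hA))).aemeasurable
      _ = ∫⁻ p, haarCircle (Prod.mk p.1 ⁻¹' A) ∂ν := by
          refine lintegral_congr fun p => ?_
          have hptw : ∀ w : Circle, (π ⁻¹' A).indicator 1 (w, p)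
              = (Prod.mk p.1 ⁻¹' A).indicator (fun _ => (1 : ℝ≥0∞)) (w * p.2) := fun w => rfl
          simp_rw [hptw]
          rw [lintegral_mul_right_eq_self (μ := haarCircle)
            ((Prod.mk p.1 ⁻¹' A).indicator fun _ => (1 : ℝ≥0∞)) p.2]
          exact lintegral_indicator_one (measurable_prodMk_left hA)
      _ = ∫⁻ x, haarCircle (Prod.mk x ⁻¹' A) ∂ν₀ :=
          (lintegral_map (measurable_measure_prodMk_left hA) measurable_fst).symm
  have hμep : μ₀.prod haarCircle = (haarCircle.prod ν).map π := by rw [key1, hν₀]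
  -- partial rotation averages are multiples of μ
  have keyE : ∀ E : Set Circle, MeasurableSet E →
      ((haarCircle.restrict E).prod ν).map π = haarCircle E • (μ₀.prod haarCircle) := by
    intro E hE
    set lam := ((haarCircle.restrict E).prod ν).map π with hlamdef
    have hle : lam ≤ μ₀.prod haarCircle := by
      rw [hμep]
      refine Measure.map_mono (Measure.le_iff.mpr fun s hs => ?_) hπm
      rw [Measure.prod_apply hs, Measure.prod_apply hs]
      exact lintegral_mono' Measure.restrict_le_self (le_refl _)
    have hinv : lam.map e = lam := by
      rw [hlamdef, Measure.map_map e.measurable hπm]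
      have hcomm : (⇑e ∘ π) = π ∘ (Prod.map id ⇑e) := by
        funext q
        show (T₀ q.2.1, f q.2.1 * (q.1 * q.2.2)) = (T₀ q.2.1, q.1 * (f q.2.1 * q.2.2))
        rw [mul_left_comm]
      rw [hcomm, ← Measure.map_map hπm (measurable_id.prodMap e.measurable),
        ← Measure.map_prod_map _ _ measurable_id e.measurable, Measure.map_id]
      have hνe : ν.map e = ν := by rw [hecoe]; exact hνinv
      rw [hνe]
    have hmass : lam Set.univ = haarCircle E := by
      rw [hlamdef, Measure.map_apply hπm MeasurableSet.univ, Set.preimage_univ,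
        ← Set.univ_prod_univ, Measure.prod_prod,
        Measure.restrict_apply MeasurableSet.univ, Set.univ_inter, measure_univ, mul_one]
    have := ergodic_smul_aux e (μ₀.prod haarCircle) lam herg' hinv
      (hle.absolutelyContinuous)
    rwa [hmass] at this
  -- test against continuous functions
  refine ext_aux ν (μ₀.prod haarCircle) hνr
    (prod_regular μ₀ haarCircle inferInstance inferInstance) ?_
  intro g hg01
  set φ : Circle → ℝ≥0∞ := fun w => ∫⁻ p, ENNReal.ofReal (g (p.1, w * p.2)) ∂ν with hφdef
  set ψ : Circle → ℝ := fun w => ∫ p, g (p.1, w * p.2) ∂ν with hψdef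
  have hint : ∀ w : Circle, Integrable (fun p : X₀ × Circle => g (p.1, w * p.2)) ν := by
    intro w
    have hc : Continuous fun p : X₀ × Circle => g (p.1, w * p.2) :=
      g.continuous.comp (continuous_fst.prodMk (continuous_const.mul continuous_snd))
    exact hc.integrable_of_hasCompactSupport (HasCompactSupport.of_compactSpace _)
  have hφψ : ∀ w, φ w = ENNReal.ofReal (ψ w) := fun w =>
    (MeasureTheory.ofReal_integral_eq_lintegral_ofReal (hint w)
      (Filter.Eventually.of_forall fun p => (hg01 _).1)).symm
  have hψc : Continuous ψ := by
    refine continuous_of_dominated (bound := fun _ => (1 : ℝ)) ?_ ?_ ?_ ?_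
    · exact fun w => (hint w).1
    · intro w
      refine Filter.Eventually.of_forall fun p => ?_
      show ‖g (p.1, w * p.2)‖ ≤ 1
      have h01 := hg01 (p.1, w * p.2)
      rw [Real.norm_eq_abs, abs_le]
      exact ⟨by linarith [h01.1], h01.2⟩
    · exact integrable_const 1
    · exact Filter.Eventually.of_forall fun p =>
        g.continuous.comp (continuous_const.prodMk (continuous_id.mul continuous_const))
  have hφc : Continuous φ := by
    rw [show φ = fun w => ENNReal.ofReal (ψ w) from funext hφψ]
    exact ENNReal.continuous_ofReal.comp hψc
  set c : ℝ≥0∞ := ∫⁻ q, ENNReal.ofReal (g q) ∂(μ₀.prod haarCircle) with hcdef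
  have hgm : Measurable fun q : X₀ × Circle => ENNReal.ofReal (g q) :=
    ENNReal.measurable_ofReal.comp g.continuous.measurable
  have hsetint : ∀ E : Set Circle, MeasurableSet E → haarCircle E < ⊤ →
      ∫⁻ w in E, φ w ∂haarCircle = ∫⁻ w in E, (fun _ => c) w ∂haarCircle := by
    intro E hE _
    have h2 : ∫⁻ q, ENNReal.ofReal (g q) ∂(((haarCircle.restrict E).prod ν).map π)
        = ∫⁻ q, ENNReal.ofReal (g q) ∂(haarCircle E • (μ₀.prod haarCircle)) := by
      rw [keyE E hE]
    rw [lintegral_map hgm hπm,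
      MeasureTheory.lintegral_prod (fun z => ENNReal.ofReal (g (π z)))
        ((hgm.comp hπm).aemeasurable),
      lintegral_smul_measure] at h2
    show ∫⁻ w in E, φ w ∂haarCircle = ∫⁻ _ in E, c ∂haarCircle
    rw [setLIntegral_const, mul_comm, hcdef]
    exact h2
  have hφae : φ =ᵐ[haarCircle] fun _ => c :=
    ae_eq_of_forall_setLIntegral_eq_of_sigmaFinite hφc.measurable measurable_const hsetint
  have hφeq : φ = fun _ => c := (hφc.ae_eq_iff_eq haarCircle continuous_const).mp hφae
  calc ∫⁻ y, ENNReal.ofReal (g y) ∂ν = φ 1 := by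
        rw [hφdef]
        exact (lintegral_congr fun p => by rw [one_mul]).symm
    _ = c := congrFun hφeq 1
end

section
/- Let (X, T) be a uniquely ergodic classical dynamical system with unique invariant measure μ. Let λ ∈ ℂ with |λ| = 1 and let u : X → ℂ be continuous with |u(x)| = 1 for all x ∈ X and u(T x) = λ·u(x) for all x ∈ X. Then for every continuous a : X → ℂ, the Cesaro means (1/n)·∑_{k=0}^{n−1} λ^{−k}·a(T^k x) converge, uniformly in x ∈ X as n → ∞, to (∫_X conj(u)·a dμ)·u(x). -/
open MeasureTheory Filter
open Set TopologicalSpace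
open scoped ENNReal NNReal


section RMK
variable {X : Type*} [TopologicalSpace X] [CompactSpace X] [T2Space X]

namespace RMKaux

variable (Λ : C(X, ℝ) →ₗ[ℝ] ℝ) (hΛ : ∀ f : C(X, ℝ), 0 ≤ f → 0 ≤ Λ f)
set_option linter.unusedSectionVars false


/-- test functions for a compact set -/
def FF (K : Set X) : Set C(X, ℝ) := {f | 0 ≤ f ∧ ∀ x ∈ K, 1 ≤ f x}

theorem one_mem_FF (K : Set X) : (1 : C(X, ℝ)) ∈ FF K :=
  ⟨by rw [ContinuousMap.le_def]; intro x; simp, fun x _ => by simp⟩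

theorem FF_nonneg {K : Set X} {f : C(X, ℝ)} (hf : f ∈ FF K) (x : X) : 0 ≤ f x := by
  have := hf.1; rw [ContinuousMap.le_def] at this; simpa using this x

include hΛ

theorem FF_image_nonempty (K : Set X) : (Λ '' FF K).Nonempty :=
  ⟨Λ 1, Set.mem_image_of_mem Λ (one_mem_FF K)⟩

theorem lmono {f g : C(X, ℝ)} (h : f ≤ g) :
    Λ f ≤ Λ g := by
  have h0 : (0 : ℝ) ≤ Λ (g - f) := hΛ _ (by
    rw [ContinuousMap.le_def] at h ⊢
    intro x; simpa using h x)
  rw [map_sub] at h0; linarith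


theorem bddBelow_FF (K : Set X) : BddBelow (Λ '' FF K) := by
  refine ⟨0, ?_⟩
  rintro y ⟨f, hf, rfl⟩
  exact hΛ f hf.1

/-- the real-valued Riesz content -/
noncomputable def rc (K : Set X) : ℝ := sInf (Λ '' FF K)

theorem rc_nonneg (K : Set X) : 0 ≤ rc Λ K :=
  le_csInf (FF_image_nonempty Λ hΛ K) (by rintro y ⟨f, hf, rfl⟩; exact hΛ f hf.1)

theorem rc_le (K : Set X) {f : C(X, ℝ)} (hf : f ∈ FF K) : rc Λ K ≤ Λ f :=
  csInf_le (bddBelow_FF Λ hΛ K) ⟨f, hf, rfl⟩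

theorem rc_mono {K₁ K₂ : Set X} (h : K₁ ⊆ K₂) : rc Λ K₁ ≤ rc Λ K₂ := by
  apply le_csInf (FF_image_nonempty Λ hΛ K₂)
  rintro y ⟨f, hf, rfl⟩
  exact rc_le Λ hΛ _ ⟨hf.1, fun x hx => hf.2 x (h hx)⟩

theorem exists_FF_lt (K : Set X) {ε : ℝ} (hε : 0 < ε) :
    ∃ f ∈ FF K, Λ f < rc Λ K + ε := by
  obtain ⟨y, ⟨f, hf, rfl⟩, hy⟩ := exists_lt_of_csInf_lt (FF_image_nonempty Λ hΛ K)
    (lt_add_of_pos_right (rc Λ K) hε)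
  exact ⟨f, hf, hy⟩

theorem rc_sup_le (K₁ K₂ : Set X) : rc Λ (K₁ ∪ K₂) ≤ rc Λ K₁ + rc Λ K₂ := by
  refine le_of_forall_pos_le_add fun ε hε => ?_
  obtain ⟨f₁, hf₁, h1⟩ := exists_FF_lt Λ hΛ K₁ (half_pos hε)
  obtain ⟨f₂, hf₂, h2⟩ := exists_FF_lt Λ hΛ K₂ (half_pos hε)
  have : f₁ + f₂ ∈ FF (K₁ ∪ K₂) := by
    constructor
    · rw [ContinuousMap.le_def]; intro x
      simpa using add_nonneg (FF_nonneg hf₁ x) (FF_nonneg hf₂ x)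
    · rintro x (hx | hx) <;> simp only [ContinuousMap.add_apply]
      · have := FF_nonneg hf₂ x; have := hf₁.2 x hx; linarith
      · have := FF_nonneg hf₁ x; have := hf₂.2 x hx; linarith
  calc rc Λ (K₁ ∪ K₂) ≤ Λ (f₁ + f₂) := rc_le Λ hΛ _ this
    _ = Λ f₁ + Λ f₂ := map_add _ _ _
    _ ≤ rc Λ K₁ + rc Λ K₂ + ε := by linarith

theorem rc_sup_disjoint (K₁ K₂ : Set X) (hK₁ : IsCompact K₁) (hK₂ : IsCompact K₂)
    (hd : Disjoint K₁ K₂) : rc Λ (K₁ ∪ K₂) = rc Λ K₁ + rc Λ K₂ := by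
  refine le_antisymm (rc_sup_le Λ hΛ K₁ K₂) ?_
  obtain ⟨g, hg1, hg2, hg01⟩ := exists_continuous_zero_one_of_isCompact hK₁ hK₂.isClosed hd
  refine le_of_forall_pos_le_add fun ε hε => ?_
  obtain ⟨f, hf, hfΛ⟩ := exists_FF_lt Λ hΛ (K₁ ∪ K₂) hε
  have hmem1 : f * (1 - g) ∈ FF K₁ := by
    constructor
    · rw [ContinuousMap.le_def]; intro x
      have := (hg01 x).2
      simpa using mul_nonneg (FF_nonneg hf x) (by linarith)
    · intro x hx
      have : g x = 0 := hg1 hx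
      have h1 : 1 ≤ f x := hf.2 x (Or.inl hx)
      simp [this]
      linarith
  have hmem2 : f * g ∈ FF K₂ := by
    constructor
    · rw [ContinuousMap.le_def]; intro x
      have := (hg01 x).1
      simpa using mul_nonneg (FF_nonneg hf x) this
    · intro x hx
      have : g x = (1 : ℝ) := hg2 hx
      have h1 : 1 ≤ f x := hf.2 x (Or.inr hx)
      simp only [ContinuousMap.mul_apply, this, mul_one]
      exact h1
  have key : Λ (f * (1 - g)) + Λ (f * g) = Λ f := by
    rw [← map_add]
    congr 1
    ext x
    simp
    ring
  have := rc_le Λ hΛ _ hmem1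
  have := rc_le Λ hΛ _ hmem2
  linarith


/-- The Riesz content associated to a positive functional. -/
noncomputable def rieszC : Content X where
  toFun K := ⟨rc Λ K, rc_nonneg Λ hΛ K⟩
  mono' K₁ K₂ h := by exact rc_mono Λ hΛ h
  sup_disjoint' K₁ K₂ hd h₁ h₂ := by
    have := rc_sup_disjoint Λ hΛ K₁ K₂ K₁.2 K₂.2 hd
    apply NNReal.coe_injective
    exact this
  sup_le' K₁ K₂ := by
    have := rc_sup_le Λ hΛ (K₁ : Set X) K₂
    exact this

theorem rieszC_apply (K : Compacts X) :
    (rieszC Λ hΛ K : ℝ≥0∞) = ENNReal.ofReal (rc Λ K) := by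
  simp [rieszC, ENNReal.ofReal, Real.toNNReal, NNReal.coe_mk]
  congr 1
  exact congrArg ENNReal.ofNNReal (Subtype.ext (max_eq_left (rc_nonneg Λ hΛ K)).symm)

theorem rieszC_regular : Content.ContentRegular (rieszC Λ hΛ) := by
  intro K
  refine le_antisymm (le_iInf fun K' => le_iInf fun hK' => ?_) ?_
  · exact (rieszC Λ hΛ).mono K K' (hK'.trans interior_subset)
  · refine ENNReal.le_of_forall_pos_le_add fun ε' hε' _ => ?_
    set c : ℝ := rc Λ (K : Set X) with hc
    have hc0 : 0 ≤ c := rc_nonneg Λ hΛ _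
    set ε : ℝ := min 1 (ε' / (c + 2)) with hεdef
    have hεpos : 0 < ε := lt_min one_pos (div_pos (by exact_mod_cast hε') (by linarith))
    have hε1 : ε ≤ 1 := min_le_left _ _
    have hεε' : ε * (c + 2) ≤ ε' := by
      rw [hεdef]
      calc min 1 (ε' / (c + 2)) * (c + 2) ≤ ε' / (c + 2) * (c + 2) :=
        mul_le_mul_of_nonneg_right (min_le_right _ _) (by linarith)
      _ = ε' := div_mul_cancel₀ _ (by linarith)
    obtain ⟨f, hf, hfΛ⟩ := exists_FF_lt Λ hΛ (K : Set X) hεpos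
    have h1ε : (0:ℝ) < 1 + ε := by linarith
    set K' : Compacts X := ⟨{x | (1 + ε)⁻¹ ≤ f x},
      ((isClosed_le (by fun_prop) f.continuous).isCompact)⟩ with hK'
    have hKint : (K : Set X) ⊆ interior (K' : Set X) := by
      have hsub : (K : Set X) ⊆ {x | (1 + ε)⁻¹ < f x} := fun x hx =>
        lt_of_lt_of_le (by rw [inv_lt_one_iff₀]; right; linarith) (hf.2 x hx)
      refine hsub.trans (interior_maximal (fun x hx => (le_of_lt hx : (1 + ε)⁻¹ ≤ f x)) ?_)
      exact isOpen_lt (by fun_prop) f.continuous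
    have hmem : (1 + ε) • f ∈ FF (K' : Set X) := by
      constructor
      · rw [ContinuousMap.le_def]
        intro x
        simpa using mul_nonneg (by linarith) (FF_nonneg hf x)
      · intro x hx
        have : (1 + ε)⁻¹ ≤ f x := hx
        have := mul_le_mul_of_nonneg_left this (le_of_lt h1ε)
        simpa [mul_inv_cancel₀ (ne_of_gt h1ε)] using this
    have key : rc Λ (K' : Set X) ≤ c + ε' := by
      calc rc Λ (K' : Set X) ≤ Λ ((1 + ε) • f) := rc_le Λ hΛ _ hmem
        _ = (1 + ε) * Λ f := by rw [Λ.map_smul]; simp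
        _ ≤ (1 + ε) * (c + ε) := by nlinarith [hΛ f hf.1]
        _ = c + ε * (c + 1 + ε) := by ring
        _ ≤ c + ε * (c + 2) := by nlinarith
        _ ≤ c + ε' := by linarith
    refine iInf_le_of_le K' (iInf_le_of_le hKint ?_)
    rw [rieszC_apply Λ hΛ, rieszC_apply Λ hΛ]
    calc ENNReal.ofReal (rc Λ (K' : Set X)) ≤ ENNReal.ofReal (c + ε') :=
      ENNReal.ofReal_le_ofReal key
    _ = ENNReal.ofReal c + ENNReal.ofReal ε' := ENNReal.ofReal_add hc0 ε'.coe_nonneg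
    _ = ENNReal.ofReal c + ε' := by rw [ENNReal.ofReal_coe_nnreal]


variable [MeasurableSpace X] [BorelSpace X]

omit hΛ in
theorem cm_integrable (m : Measure X) [IsFiniteMeasure m] (f : C(X, ℝ)) :
    Integrable (fun x => f x) m :=
  f.continuous.integrable_of_hasCompactSupport (isClosed_tsupport _).isCompact

theorem measure_compacts (K : Compacts X) :
    (rieszC Λ hΛ).measure K = ENNReal.ofReal (rc Λ (K : Set X)) := by
  rw [Content.measure_eq_content_of_regular _ (rieszC_regular Λ hΛ) K, rieszC_apply Λ hΛ]

theorem measure_univ' : (rieszC Λ hΛ).measure univ = ENNReal.ofReal (Λ 1) := by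
  have h := measure_compacts Λ hΛ ⟨univ, isCompact_univ⟩
  simp only [Compacts.coe_mk] at h
  rw [h]
  congr 1
  refine le_antisymm (rc_le Λ hΛ _ (one_mem_FF univ)) ?_
  refine le_csInf (FF_image_nonempty Λ hΛ _) ?_
  rintro y ⟨f, hf, rfl⟩
  refine lmono Λ hΛ ?_
  rw [ContinuousMap.le_def]
  intro x
  simpa using hf.2 x (mem_univ x)

theorem integral_le_aux (f : C(X, ℝ)) (hf : 0 ≤ f) {ε : ℝ} (hε : 0 < ε) :
    ∫ x, f x ∂(rieszC Λ hΛ).measure ≤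
      Λ f + ε * ((rieszC Λ hΛ).measure univ).toReal := by
  set ν := (rieszC Λ hΛ).measure with hν
  have hf0 : ∀ x, 0 ≤ f x := fun x => by
    have := hf; rw [ContinuousMap.le_def] at this; simpa using this x
  set N : ℕ := ⌈‖f‖ / ε⌉₊ with hN
  set C : ℕ → Set X := fun i => {x | (i + 1 : ℝ) * ε ≤ f x} with hC
  have hCclosed : ∀ i, IsClosed (C i) := fun i =>
    isClosed_le (by fun_prop) f.continuous
  have hCcpt : ∀ i, IsCompact (C i) := fun i => (hCclosed i).isCompact
  -- test functions
  set g : ℕ → C(X, ℝ) := fun i =>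
    ⟨fun x => min (f x / ε) (i + 1) - min (f x / ε) i, by fun_prop⟩ with hg
  have hgmem : ∀ i, g i ∈ FF (C i) := by
    intro i
    constructor
    · rw [ContinuousMap.le_def]
      intro x
      simp only [ContinuousMap.coe_mk, ContinuousMap.zero_apply, g, sub_nonneg]
      exact min_le_min le_rfl (by exact_mod_cast Nat.cast_le.2 (Nat.le_succ i))
    · intro x hx
      have hxC : ((i : ℝ) + 1) * ε ≤ f x := hx
      have h1 : ((i : ℝ) + 1) ≤ f x / ε := (le_div_iff₀ hε).2 hxC
      simp only [ContinuousMap.coe_mk, g]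
      rw [min_eq_right h1, min_eq_right (le_trans (by linarith) h1)]
      simp
  have hsum_g : ∀ x, (∑ i ∈ Finset.range N, g i x) ≤ f x / ε := by
    intro x
    have h := Finset.sum_range_sub (fun i : ℕ => min (f x / ε) (i : ℝ)) N
    have heq : (∑ i ∈ Finset.range N, g i x)
        = ∑ i ∈ Finset.range N, (min (f x / ε) ((i + 1 : ℕ) : ℝ) - min (f x / ε) (i : ℝ)) := by
      refine Finset.sum_congr rfl fun i _ => ?_
      simp only [g, ContinuousMap.coe_mk]
      norm_num
    rw [heq, h]
    have h0 : min (f x / ε) ((0 : ℕ) : ℝ) = 0 := by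
      simp [min_eq_right (div_nonneg (hf0 x) hε.le)]
    rw [h0, sub_zero]
    exact min_le_left _ _
  have key1 : ε * ∑ i ∈ Finset.range N, rc Λ (C i) ≤ Λ f := by
    have h1 : ∑ i ∈ Finset.range N, rc Λ (C i) ≤ ∑ i ∈ Finset.range N, Λ (g i) :=
      Finset.sum_le_sum fun i _ => rc_le Λ hΛ _ (hgmem i)
    have h2 : (∑ i ∈ Finset.range N, Λ (g i)) = Λ (∑ i ∈ Finset.range N, g i) :=
      (map_sum Λ _ _).symm
    have h3 : Λ (∑ i ∈ Finset.range N, g i) ≤ Λ (ε⁻¹ • f) := by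
      refine lmono Λ hΛ ?_
      rw [ContinuousMap.le_def]
      intro x
      have := hsum_g x
      simp only [ContinuousMap.smul_apply, smul_eq_mul, ContinuousMap.coe_sum,
        Finset.sum_apply]
      rw [inv_mul_eq_div]
      exact this
    have h4 : Λ (ε⁻¹ • f) = ε⁻¹ * Λ f := by rw [Λ.map_smul]; simp
    have h5 : ∑ i ∈ Finset.range N, rc Λ (C i) ≤ ε⁻¹ * Λ f := by
      rw [h4] at h3; linarith
    calc ε * ∑ i ∈ Finset.range N, rc Λ (C i) ≤ ε * (ε⁻¹ * Λ f) :=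
      mul_le_mul_of_nonneg_left h5 hε.le
    _ = Λ f := by field_simp
  -- pointwise bound
  have hpt : ∀ x, f x ≤ ε + ∑ i ∈ Finset.range N, (C i).indicator (fun _ => ε) x := by
    intro x
    set t : ℝ := f x / ε with ht
    have ht0 : 0 ≤ t := div_nonneg (hf0 x) hε.le
    set m : ℕ := ⌊t⌋₊ with hm
    have hfx_le : f x ≤ ‖f‖ := (le_abs_self _).trans (f.norm_coe_le_norm x)
    have hmN : m ≤ N := by
      refine le_trans (Nat.floor_mono (show t ≤ ‖f‖ / ε from ?_)) (Nat.floor_le_ceil _)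
      rw [ht]
      gcongr
    have hsum_ge : (m : ℝ) * ε ≤ ∑ i ∈ Finset.range N, (C i).indicator (fun _ => ε) x := by
      have hsub : Finset.range m ⊆ Finset.range N := Finset.range_subset_range.2 hmN
      have heach : ∀ i ∈ Finset.range m, (C i).indicator (fun _ => ε) x = ε := by
        intro i hi
        rw [Finset.mem_range] at hi
        have : ((i : ℝ) + 1) * ε ≤ f x := by
          have h1 : ((i : ℝ) + 1) ≤ m := by exact_mod_cast Nat.succ_le_of_lt hi
          have h2 : (m : ℝ) ≤ t := Nat.floor_le ht0
          have : ((i : ℝ) + 1) ≤ t := h1.trans h2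
          calc ((i : ℝ) + 1) * ε ≤ t * ε := mul_le_mul_of_nonneg_right this hε.le
            _ = f x := by rw [ht, div_mul_cancel₀ _ (ne_of_gt hε)]
        exact Set.indicator_of_mem (show x ∈ C i from this) _
      calc (m : ℝ) * ε = ∑ i ∈ Finset.range m, (C i).indicator (fun _ => ε) x := by
            rw [Finset.sum_congr rfl heach, Finset.sum_const, Finset.card_range,
              nsmul_eq_mul]
        _ ≤ ∑ i ∈ Finset.range N, (C i).indicator (fun _ => ε) x := by
            refine Finset.sum_le_sum_of_subset_of_nonneg hsub ?_
            intro i _ _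
            exact Set.indicator_nonneg (fun _ _ => hε.le) x
    have hfx : f x < ε + (m : ℝ) * ε := by
      have := Nat.lt_floor_add_one t
      have h2 : t < m + 1 := this
      calc f x = t * ε := by rw [ht, div_mul_cancel₀ _ (ne_of_gt hε)]
        _ < ((m : ℝ) + 1) * ε := by nlinarith
        _ = ε + (m : ℝ) * ε := by ring
    linarith
  -- integrate
  haveI : IsFiniteMeasure ν := by
    constructor
    rw [measure_univ' Λ hΛ]
    exact ENNReal.ofReal_lt_top
  have hint_ind : ∀ i : ℕ, Integrable ((C i).indicator (fun _ => ε)) ν := fun i =>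
    (integrable_indicator_iff (hCclosed i).measurableSet).2
      (integrableOn_const (measure_ne_top _ _))
  have hint_rhs : Integrable (fun x => ε + ∑ i ∈ Finset.range N,
      (C i).indicator (fun _ => ε) x) ν :=
    (integrable_const ε).add (integrable_finset_sum _ fun i _ => hint_ind i)
  have hint : ∫ x, f x ∂ν ≤ ∫ x, (ε + ∑ i ∈ Finset.range N,
      (C i).indicator (fun _ => ε) x) ∂ν :=
    integral_mono (cm_integrable ν f) hint_rhs hpt
  have hcalc : ∫ x, (ε + ∑ i ∈ Finset.range N, (C i).indicator (fun _ => ε) x) ∂ν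
      = ε * (ν univ).toReal + ∑ i ∈ Finset.range N, ε * (ν (C i)).toReal := by
    rw [integral_add (integrable_const ε) (integrable_finset_sum _ fun i _ => hint_ind i),
      integral_const, integral_finset_sum _ fun i _ => hint_ind i]
    congr 1
    · simp [mul_comm, Measure.real]
    · refine Finset.sum_congr rfl fun i _ => ?_
      rw [integral_indicator_const ε (hCclosed i).measurableSet]
      simp [mul_comm, Measure.real]
  have hνC : ∀ i, (ν (C i)).toReal = rc Λ (C i) := by
    intro i
    have h := measure_compacts Λ hΛ ⟨C i, hCcpt i⟩
    simp only [Compacts.coe_mk] at h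
    rw [hν, h]
    exact ENNReal.toReal_ofReal (rc_nonneg Λ hΛ _)
  calc ∫ x, f x ∂ν ≤ ε * (ν univ).toReal + ∑ i ∈ Finset.range N, ε * (ν (C i)).toReal := by
        rw [← hcalc]; exact hint
    _ = ε * (ν univ).toReal + ε * ∑ i ∈ Finset.range N, rc Λ (C i) := by
        rw [Finset.mul_sum]
        congr 1
        exact Finset.sum_congr rfl fun i _ => by rw [hνC i]
    _ ≤ Λ f + ε * (ν univ).toReal := by linarith [key1]


theorem finite_meas : IsFiniteMeasure (rieszC Λ hΛ).measure := by
  constructor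
  rw [measure_univ' Λ hΛ]
  exact ENNReal.ofReal_lt_top

theorem integral_le (f : C(X, ℝ)) (hf : 0 ≤ f) :
    ∫ x, f x ∂(rieszC Λ hΛ).measure ≤ Λ f := by
  haveI := finite_meas Λ hΛ
  refine le_of_forall_pos_le_add fun ε₀ hε₀ => ?_
  set M : ℝ := (((rieszC Λ hΛ).measure) univ).toReal with hM
  have hM0 : 0 ≤ M := ENNReal.toReal_nonneg
  have h := integral_le_aux Λ hΛ f hf (ε := ε₀ / (M + 1)) (by positivity)
  have h2 : ε₀ / (M + 1) * M ≤ ε₀ := by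
    rw [div_mul_eq_mul_div, div_le_iff₀ (by linarith)]
    nlinarith
  rw [← hM] at h
  linarith

theorem lam_one_nonneg : 0 ≤ Λ 1 :=
  hΛ 1 (by rw [ContinuousMap.le_def]; intro x; simp)

theorem toReal_univ : (((rieszC Λ hΛ).measure) univ).toReal = Λ 1 := by
  rw [measure_univ' Λ hΛ]
  exact ENNReal.toReal_ofReal (lam_one_nonneg Λ hΛ)

omit hΛ in
theorem const_eq_smul_one (c : ℝ) : (ContinuousMap.const X c) = c • (1 : C(X, ℝ)) := by
  ext x; simp

theorem rmk_integral_eq (f : C(X, ℝ)) :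
    ∫ x, f x ∂(rieszC Λ hΛ).measure = Λ f := by
  haveI := finite_meas Λ hΛ
  set ν := (rieszC Λ hΛ).measure with hν
  set c : ℝ := ‖f‖ with hc
  have habs : ∀ x, |f x| ≤ c := fun x => f.norm_coe_le_norm x
  have h1 : (0 : C(X, ℝ)) ≤ f + ContinuousMap.const X c := by
    rw [ContinuousMap.le_def]
    intro x
    have := abs_le.1 (habs x)
    simp only [ContinuousMap.zero_apply, ContinuousMap.add_apply, ContinuousMap.const_apply]
    linarith [this.1]
  have h2 : (0 : C(X, ℝ)) ≤ ContinuousMap.const X c - f := by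
    rw [ContinuousMap.le_def]
    intro x
    have := abs_le.1 (habs x)
    simp only [ContinuousMap.zero_apply, ContinuousMap.sub_apply, ContinuousMap.const_apply,
      sub_nonneg]
    exact this.2
  have hL1 : Λ (ContinuousMap.const X c) = c * Λ 1 := by
    rw [const_eq_smul_one, Λ.map_smul]; simp
  have hI1 : ∫ x, (ContinuousMap.const X c) x ∂ν = c * Λ 1 := by
    simp only [ContinuousMap.const_apply]
    rw [integral_const]
    simp [smul_eq_mul, hν, Measure.real, toReal_univ Λ hΛ, mul_comm]
  have e1 : ∫ x, (f + ContinuousMap.const X c) x ∂ν = (∫ x, f x ∂ν) + c * Λ 1 := by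
    simp only [ContinuousMap.add_apply]
    rw [integral_add (cm_integrable ν f) (cm_integrable ν (ContinuousMap.const X c)), hI1]
  have e2 : ∫ x, (ContinuousMap.const X c - f) x ∂ν = c * Λ 1 - ∫ x, f x ∂ν := by
    simp only [ContinuousMap.sub_apply]
    rw [integral_sub (cm_integrable ν (ContinuousMap.const X c)) (cm_integrable ν f), hI1]
  have k1 := integral_le Λ hΛ _ h1
  have k2 := integral_le Λ hΛ _ h2
  rw [← hν] at k1 k2
  rw [e1, map_add, hL1] at k1
  rw [e2, map_sub, hL1] at k2
  linarith

/-- The Riesz–Markov–Kakutani representation theorem, in the form we need. -/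
theorem exists_measure (hΛ1 : Λ 1 = 1) :
    ∃ ν : Measure X, IsProbabilityMeasure ν ∧ ν.Regular ∧
      ∀ f : C(X, ℝ), ∫ x, f x ∂ν = Λ f := by
  refine ⟨(rieszC Λ hΛ).measure, ?_, inferInstance, fun f => rmk_integral_eq Λ hΛ f⟩
  constructor
  rw [measure_univ' Λ hΛ, hΛ1]
  simp

end RMKaux

section Uniq
variable [MeasurableSpace X] [BorelSpace X]

theorem measure_compact_le_of_integral_eq (ν₁ ν₂ : Measure X) [IsFiniteMeasure ν₁]
    [IsFiniteMeasure ν₂] [ν₂.Regular]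
    (h : ∀ f : C(X, ℝ), ∫ x, f x ∂ν₁ = ∫ x, f x ∂ν₂)
    {K : Set X} (hK : IsCompact K) : ν₁ K ≤ ν₂ K := by
  refine ENNReal.le_of_forall_pos_le_add fun ε hε _ => ?_
  have hlt : ν₂ K < ν₂ K + ε := ENNReal.lt_add_right (measure_ne_top _ _)
    (by exact_mod_cast hε.ne')
  obtain ⟨U, hKU, hUo, hU⟩ := Set.exists_isOpen_lt_of_lt K _ hlt
  obtain ⟨f, hf1, hf0, _, hf01⟩ := exists_continuous_one_zero_of_isCompact hK
    hUo.isClosed_compl (disjoint_compl_right_iff_subset.2 hKU)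
  have hfint1 : Integrable (fun x => f x) ν₁ := RMKaux.cm_integrable ν₁ f
  have hfint2 : Integrable (fun x => f x) ν₂ := RMKaux.cm_integrable ν₂ f
  have step1 : (ν₁ K).toReal ≤ ∫ x, f x ∂ν₁ := by
    have e1 : ∫ x in K, f x ∂ν₁ = (ν₁ K).toReal := by
      rw [setIntegral_congr_fun hK.measurableSet (by intro x hx; exact hf1 hx)]
      simp [setIntegral_const, Measure.real]
    rw [← e1]
    exact setIntegral_le_integral hfint1 (Eventually.of_forall fun x => (hf01 x).1)
  have step2 : ∫ x, f x ∂ν₂ ≤ (ν₂ U).toReal := by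
    have hmono : ∀ x, f x ≤ U.indicator (fun _ => (1 : ℝ)) x := by
      intro x
      by_cases hx : x ∈ U
      · rw [Set.indicator_of_mem hx]; exact (hf01 x).2
      · rw [Set.indicator_of_notMem hx]
        have : f x = 0 := hf0 hx
        simp [this]
    have hindint : Integrable (U.indicator (fun _ => (1 : ℝ))) ν₂ :=
      (integrable_indicator_iff hUo.measurableSet).2
        (integrableOn_const (measure_ne_top _ _))
    calc ∫ x, f x ∂ν₂ ≤ ∫ x, U.indicator (fun _ => (1 : ℝ)) x ∂ν₂ :=
          integral_mono hfint2 hindint hmono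
      _ = (ν₂ U).toReal := by rw [integral_indicator_const _ hUo.measurableSet]; simp [Measure.real]
  have hUK : (ν₂ U).toReal ≤ (ν₂ (K : Set X) + ε).toReal :=
    ENNReal.toReal_mono (by finiteness) hU.le
  have : (ν₁ K).toReal ≤ ((ν₂ K : ℝ≥0∞) + ε).toReal := by
    rw [← h f] at step2
    linarith
  exact (ENNReal.toReal_le_toReal (measure_ne_top _ _) (by finiteness)).1 this

theorem measure_eq_of_integral_eq (ν₁ ν₂ : Measure X) [IsFiniteMeasure ν₁]
    [IsFiniteMeasure ν₂] [ν₁.Regular] [ν₂.Regular]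
    (h : ∀ f : C(X, ℝ), ∫ x, f x ∂ν₁ = ∫ x, f x ∂ν₂) : ν₁ = ν₂ := by
  have hK : ∀ K : Set X, IsCompact K → ν₁ K = ν₂ K := fun K hKc =>
    le_antisymm (measure_compact_le_of_integral_eq ν₁ ν₂ h hKc)
      (measure_compact_le_of_integral_eq ν₂ ν₁ (fun f => (h f).symm) hKc)
  have hU : ∀ U : Set X, IsOpen U → ν₁ U = ν₂ U := by
    intro U hUo
    rw [hUo.measure_eq_iSup_isCompact ν₁, hUo.measure_eq_iSup_isCompact ν₂]
    refine iSup_congr fun K => iSup_congr fun _ => iSup_congr fun hKc => hK K hKc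
  ext s hs
  rw [Set.measure_eq_iInf_isOpen s ν₁, Set.measure_eq_iInf_isOpen s ν₂]
  exact iInf_congr fun U => iInf_congr fun _ => iInf_congr fun hUo => hU U hUo

end Uniq
end RMK

section Oxtoby

variable {X : Type*} [TopologicalSpace X] [CompactSpace X] [T2Space X] [Nonempty X]
  [MeasurableSpace X] [BorelSpace X]

theorem oxtoby (T : X → X) (hT : Continuous T)
    (μ : Measure X) [IsProbabilityMeasure μ] [μ.Regular] (hμ : Measure.map T μ = μ)
    (huniq : ∀ ν : Measure X, IsProbabilityMeasure ν → ν.Regular →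
      Measure.map T ν = ν → ν = μ)
    (g : C(X, ℝ)) :
    TendstoUniformly
      (fun (n : ℕ) (x : X) => (n : ℝ)⁻¹ * ∑ k ∈ Finset.range n, g (T^[k] x))
      (fun _ => ∫ y, g y ∂μ) atTop := by
  set c : ℝ := ∫ y, g y ∂μ with hc
  set A : ℕ → X → ℝ := fun n x => (n : ℝ)⁻¹ * ∑ k ∈ Finset.range n, g (T^[k] x) with hA
  by_contra hcon
  rw [Metric.tendstoUniformly_iff] at hcon
  push_neg at hcon
  obtain ⟨ε, hε, hfreq⟩ := hcon
  -- the bad set of indices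
  set P : Set ℕ := {n | ∃ x, ε ≤ dist c (A n x)} with hP
  have hfreqP : ∃ᶠ n in atTop, n ∈ P := by
    refine hfreq.mono fun n hn => ?_
    obtain ⟨x, hx⟩ := hn
    exact ⟨x, hx⟩
  have hne : (atTop ⊓ Filter.principal P).NeBot := Filter.frequently_iff_neBot.1 hfreqP
  set U : Ultrafilter ℕ := @Ultrafilter.of ℕ (atTop ⊓ Filter.principal P) hne with hU
  have hUle : (U : Filter ℕ) ≤ atTop ⊓ Filter.principal P := Ultrafilter.of_le _
  have hUatTop : (U : Filter ℕ) ≤ atTop := hUle.trans inf_le_left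
  have hUP : P ∈ U := le_principal_iff.1 (hUle.trans inf_le_right)
  -- choice of points
  have hxs : ∀ n : ℕ, ∃ x : X, n ∈ P → ε ≤ dist c (A n x) := by
    intro n
    by_cases hn : n ∈ P
    · obtain ⟨x, hx⟩ := hn
      exact ⟨x, fun _ => hx⟩
    · exact ⟨Classical.arbitrary X, fun h => absurd h hn⟩
  choose xs hxs' using hxs
  set I : C(X, ℝ) → ℕ → ℝ := fun f n => (n : ℝ)⁻¹ * ∑ k ∈ Finset.range n, f (T^[k] (xs n))
    with hI
  have hIbound : ∀ (f : C(X, ℝ)) (n : ℕ), 1 ≤ n → I f n ∈ Set.Icc (-‖f‖) ‖f‖ := by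
    intro f n hn
    have h1 : |∑ k ∈ Finset.range n, f (T^[k] (xs n))| ≤ (n : ℝ) * ‖f‖ := by
      calc |∑ k ∈ Finset.range n, f (T^[k] (xs n))|
          ≤ ∑ k ∈ Finset.range n, |f (T^[k] (xs n))| := Finset.abs_sum_le_sum_abs _ _
        _ ≤ ∑ k ∈ Finset.range n, ‖f‖ := Finset.sum_le_sum fun k _ =>
            (f.norm_coe_le_norm _)
        _ = (n : ℝ) * ‖f‖ := by simp [mul_comm]
    have hn0 : (0 : ℝ) < n := by exact_mod_cast hn
    have : |I f n| ≤ ‖f‖ := by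
      rw [hI]
      simp only [abs_mul, abs_inv, abs_of_pos hn0]
      rw [inv_mul_le_iff₀ hn0]
      exact h1
    exact abs_le.1 this
  have hlim : ∀ f : C(X, ℝ), ∃ L, Filter.Tendsto (I f) (U : Filter ℕ) (nhds L) := by
    intro f
    have hIcc : Set.Icc (-‖f‖) ‖f‖ ∈ Ultrafilter.map (I f) U := by
      apply Filter.mem_map.2
      have : {n : ℕ | 1 ≤ n} ∈ (U : Filter ℕ) := hUatTop (Filter.eventually_ge_atTop 1)
      exact Filter.mem_of_superset this fun n hn => hIbound f n hn
    obtain ⟨L, _, hL⟩ := isCompact_Icc.ultrafilter_le_nhds (Ultrafilter.map (I f) U)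
      (le_principal_iff.2 hIcc)
    exact ⟨L, hL⟩
  choose Lam hLam using hlim
  -- linearity etc.
  have hadd : ∀ f₁ f₂ : C(X, ℝ), Lam (f₁ + f₂) = Lam f₁ + Lam f₂ := by
    intro f₁ f₂
    have h1 : Filter.Tendsto (I (f₁ + f₂)) (U : Filter ℕ) (nhds (Lam f₁ + Lam f₂)) := by
      have := (hLam f₁).add (hLam f₂)
      refine this.congr fun n => ?_
      rw [hI]
      simp only [ContinuousMap.add_apply, Finset.sum_add_distrib]
      ring
    exact tendsto_nhds_unique (hLam _) h1
  have hsmul : ∀ (r : ℝ) (f : C(X, ℝ)), Lam (r • f) = r * Lam f := by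
    intro r f
    have h1 : Filter.Tendsto (I (r • f)) (U : Filter ℕ) (nhds (r * Lam f)) := by
      have := (hLam f).const_mul r
      refine this.congr fun n => ?_
      rw [hI]
      simp only [ContinuousMap.smul_apply, smul_eq_mul, Finset.mul_sum]
      exact Finset.sum_congr rfl fun k _ => by ring
    exact tendsto_nhds_unique (hLam _) h1
  set Λ : C(X, ℝ) →ₗ[ℝ] ℝ :=
    { toFun := Lam
      map_add' := hadd
      map_smul' := fun r f => by simpa using hsmul r f } with hΛdef
  have hΛpos : ∀ f : C(X, ℝ), 0 ≤ f → 0 ≤ Λ f := by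
    intro f hf
    have hf' : ∀ x, 0 ≤ f x := fun x => by
      rw [ContinuousMap.le_def] at hf; simpa using hf x
    refine ge_of_tendsto (hLam f) (Filter.Eventually.of_forall fun n => ?_)
    rw [hI]
    refine mul_nonneg (by positivity) (Finset.sum_nonneg fun k _ => hf' _)
  have hΛone : Λ 1 = 1 := by
    have h1 : Filter.Tendsto (I 1) (U : Filter ℕ) (nhds 1) := by
      have hev : {n : ℕ | 1 ≤ n} ∈ (U : Filter ℕ) := hUatTop (Filter.eventually_ge_atTop 1)
      refine Filter.Tendsto.congr' ?_ tendsto_const_nhds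
      refine Filter.eventuallyEq_of_mem hev fun n hn => ?_
      have hn0 : (n : ℝ) ≠ 0 := by
        have : (1 : ℕ) ≤ n := hn
        positivity
      rw [hI]
      simp [hn0]
    exact tendsto_nhds_unique (hLam _) h1
  -- invariance
  have hΛinv : ∀ f : C(X, ℝ), Λ (f.comp ⟨T, hT⟩) = Λ f := by
    intro f
    have hkey : ∀ n : ℕ, I (f.comp ⟨T, hT⟩) n - I f n
        = (n : ℝ)⁻¹ * (f (T^[n] (xs n)) - f (xs n)) := by
      intro n
      have htel : ∀ m : ℕ, (∑ k ∈ Finset.range m,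
          (f (T^[k+1] (xs n)) - f (T^[k] (xs n))))
          = f (T^[m] (xs n)) - f (T^[0] (xs n)) := by
        intro m
        induction m with
        | zero => simp
        | succ m ih => rw [Finset.sum_range_succ, ih]; ring
      simp only [hI, ContinuousMap.comp_apply, ContinuousMap.coe_mk]
      rw [← mul_sub]
      congr 1
      have h2 : (∑ k ∈ Finset.range n, f (T (T^[k] (xs n))))
          = ∑ k ∈ Finset.range n, f (T^[k+1] (xs n)) :=
        Finset.sum_congr rfl fun k _ => by rw [← Function.iterate_succ_apply' T k]
      rw [h2, ← Finset.sum_sub_distrib, htel n]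
      simp
    have hdiff : Filter.Tendsto (fun n => I (f.comp ⟨T, hT⟩) n - I f n) (U : Filter ℕ)
        (nhds 0) := by
      apply Filter.Tendsto.mono_left ?_ hUatTop
      have hb : ∀ n : ℕ, ‖I (f.comp ⟨T, hT⟩) n - I f n‖ ≤ (n : ℝ)⁻¹ * (2 * ‖f‖) := by
        intro n
        rw [hkey n, Real.norm_eq_abs, abs_mul, abs_inv, Nat.abs_cast]
        refine mul_le_mul_of_nonneg_left ?_ (by positivity)
        calc |f (T^[n] (xs n)) - f (xs n)| ≤ |f (T^[n] (xs n))| + |f (xs n)| :=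
              abs_sub _ _
          _ ≤ ‖f‖ + ‖f‖ := add_le_add (f.norm_coe_le_norm _) (f.norm_coe_le_norm _)
          _ = 2 * ‖f‖ := by ring
      apply squeeze_zero_norm hb
      have := tendsto_inv_atTop_nhds_zero_nat.mul_const (2 * ‖f‖)
      simpa using this
    have h1 : Filter.Tendsto (I (f.comp ⟨T, hT⟩)) (U : Filter ℕ) (nhds (Lam f)) := by
      have h2 := (hLam f).add hdiff
      rw [add_zero] at h2
      refine h2.congr fun n => by ring
    exact tendsto_nhds_unique (hLam _) h1
  -- the defect
  have hdev : ε ≤ dist c (Λ g) := by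
    have htend : Filter.Tendsto (fun n => dist c (I g n)) (U : Filter ℕ)
        (nhds (dist c (Lam g))) := tendsto_const_nhds.dist (hLam g)
    refine ge_of_tendsto htend ?_
    exact Filter.mem_of_superset hUP fun n hn => hxs' n hn
  -- RMK measure
  obtain ⟨ν, hprob, hreg, hrep⟩ := RMKaux.exists_measure Λ hΛpos hΛone
  haveI := hprob
  haveI := hreg
  have hmap : Measure.map T ν = ν := by
    haveI : IsProbabilityMeasure (Measure.map T ν) :=
      Measure.isProbabilityMeasure_map hT.measurable.aemeasurable
    haveI : (Measure.map T ν).InnerRegular :=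
      MeasureTheory.Measure.InnerRegular.map_of_continuous hT
    refine measure_eq_of_integral_eq _ _ fun f => ?_
    rw [integral_map hT.measurable.aemeasurable f.continuous.aestronglyMeasurable]
    have h1 : ∫ x, f (T x) ∂ν = Λ (f.comp ⟨T, hT⟩) := hrep (f.comp ⟨T, hT⟩)
    rw [h1, hrep f]
    exact hΛinv f
  have hνμ : ν = μ := huniq ν hprob hreg hmap
  have : Λ g = c := by
    rw [← hrep g, hνμ]
  rw [this] at hdev
  simp at hdev
  linarith

end Oxtoby


/-- For a uniquely ergodic system `(X, T, μ)`, a unimodular `λ` and a continuous unimodular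
eigenfunction `u` with `u∘T = λ u`, the weighted Cesaro means of any continuous `a` converge
uniformly to `(∫ conj(u)·a dμ)·u`. -/
theorem stmt6 {X : Type*} [TopologicalSpace X] [CompactSpace X] [T2Space X] [Nonempty X]
    [MeasurableSpace X] [BorelSpace X]
    (T : X → X) (hT : Continuous T)
    (μ : Measure X) [IsProbabilityMeasure μ] [μ.Regular] (hμ : Measure.map T μ = μ)
    (huniq : ∀ ν : Measure X, IsProbabilityMeasure ν → ν.Regular →
      Measure.map T ν = ν → ν = μ)
    (lam : ℂ) (hlam : ‖lam‖ = 1)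
    (u : X → ℂ) (hu : Continuous u) (humod : ∀ x, ‖u x‖ = 1)
    (heig : ∀ x, u (T x) = lam * u x)
    (a : X → ℂ) (ha : Continuous a) :
    TendstoUniformly
      (fun (n : ℕ) (x : X) => (n : ℂ)⁻¹ * ∑ k ∈ Finset.range n, lam ^ (-(k : ℤ)) * a (T^[k] x))
      (fun x => (∫ y, (starRingEnd ℂ) (u y) * a y ∂μ) * u x) atTop := by
  have hbc : Continuous fun x => (starRingEnd ℂ) (u x) * a x :=
    (Complex.continuous_conj.comp hu).mul ha
  set b : X → ℂ := fun x => (starRingEnd ℂ) (u x) * a x with hbdef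
  set br : C(X, ℝ) := ⟨fun x => (b x).re, by fun_prop⟩ with hbrdef
  set bi : C(X, ℝ) := ⟨fun x => (b x).im, by fun_prop⟩ with hbidef
  have h1 := oxtoby T hT μ hμ huniq br
  have h2 := oxtoby T hT μ hμ huniq bi
  set cc : ℂ := ∫ y, b y ∂μ with hccdef
  have hbint : Integrable b μ :=
    hbc.integrable_of_hasCompactSupport (isClosed_tsupport _).isCompact
  have hre : ∫ y, br y ∂μ = cc.re := by
    have := integral_re hbint
    exact this
  have him : ∫ y, bi y ∂μ = cc.im := by
    have := integral_im hbint
    exact this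
  rw [hre] at h1
  rw [him] at h2
  -- pointwise algebra
  have hcu : ∀ x, (starRingEnd ℂ) (u x) * u x = 1 := fun x => by
    rw [Complex.conj_mul', humod x]; norm_num
  have hiter : ∀ (k : ℕ) (x : X), u (T^[k] x) = lam ^ k * u x := by
    intro k
    induction k with
    | zero => intro x; simp
    | succ k ih =>
      intro x
      rw [Function.iterate_succ_apply', heig, ih x, pow_succ]
      ring
  have hkey : ∀ (k : ℕ) (x : X), lam ^ (-(k : ℤ)) * a (T^[k] x) = b (T^[k] x) * u x := by
    intro k x
    have hb1 : b (T^[k] x) = (starRingEnd ℂ) (u (T^[k] x)) * a (T^[k] x) := rfl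
    have hconjlam : (starRingEnd ℂ) lam = lam⁻¹ := (Complex.inv_eq_conj hlam).symm
    rw [hb1, hiter k x, map_mul, map_pow, hconjlam]
    have hzpow : lam ^ (-(k : ℤ)) = (lam⁻¹) ^ k := by
      rw [zpow_neg, zpow_natCast, inv_pow]
    rw [hzpow]
    calc (lam⁻¹) ^ k * a (T^[k] x)
        = (lam⁻¹) ^ k * a (T^[k] x) * ((starRingEnd ℂ) (u x) * u x) := by
          rw [hcu x]; ring
      _ = (lam⁻¹) ^ k * (starRingEnd ℂ) (u x) * a (T^[k] x) * u x := by ring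
  -- uniform convergence
  rw [Metric.tendstoUniformly_iff]
  intro ε hε
  have h1' := Metric.tendstoUniformly_iff.1 h1 (ε / 2) (by linarith)
  have h2' := Metric.tendstoUniformly_iff.1 h2 (ε / 2) (by linarith)
  filter_upwards [h1', h2'] with n hn1 hn2 x
  have hBsum : (∑ k ∈ Finset.range n, lam ^ (-(k : ℤ)) * a (T^[k] x))
      = (∑ k ∈ Finset.range n, b (T^[k] x)) * u x := by
    rw [Finset.sum_mul]
    exact Finset.sum_congr rfl fun k _ => hkey k x
  set B : ℂ := (n : ℂ)⁻¹ * ∑ k ∈ Finset.range n, b (T^[k] x) with hBdef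
  have hFB : (n : ℂ)⁻¹ * ∑ k ∈ Finset.range n, lam ^ (-(k : ℤ)) * a (T^[k] x)
      = B * u x := by
    rw [hBsum, hBdef]; ring
  have hBre : B.re = (n : ℝ)⁻¹ * ∑ k ∈ Finset.range n, br (T^[k] x) := by
    rw [hBdef]
    have hcast : ((n : ℂ))⁻¹ = (((n : ℝ)⁻¹ : ℝ) : ℂ) := by push_cast; ring
    rw [hcast, Complex.re_ofReal_mul, Complex.re_sum]
    rfl
  have hBim : B.im = (n : ℝ)⁻¹ * ∑ k ∈ Finset.range n, bi (T^[k] x) := by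
    rw [hBdef]
    have hcast : ((n : ℂ))⁻¹ = (((n : ℝ)⁻¹ : ℝ) : ℂ) := by push_cast; ring
    rw [hcast, Complex.im_ofReal_mul, Complex.im_sum]
    rfl
  have hd1 : |cc.re - B.re| < ε / 2 := by
    have := hn1 x
    rw [Real.dist_eq] at this
    rw [hBre]
    exact this
  have hd2 : |cc.im - B.im| < ε / 2 := by
    have := hn2 x
    rw [Real.dist_eq] at this
    rw [hBim]
    exact this
  have hdist : dist (cc * u x) ((n : ℂ)⁻¹ *
      ∑ k ∈ Finset.range n, lam ^ (-(k : ℤ)) * a (T^[k] x)) = ‖cc - B‖ := by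
    rw [hFB, dist_eq_norm, ← sub_mul, norm_mul, humod x, mul_one]
  rw [hdist]
  have hnorm : ‖cc - B‖ ≤ |cc.re - B.re| + |cc.im - B.im| := by
    have := Complex.norm_le_abs_re_add_abs_im (cc - B)
    simpa [Complex.sub_re, Complex.sub_im] using this
  calc ‖cc - B‖ ≤ |cc.re - B.re| + |cc.im - B.im| := hnorm
    _ < ε / 2 + ε / 2 := add_lt_add hd1 hd2
    _ = ε := by ring
end

section
/- Let (X, T) be a uniquely ergodic classical dynamical system with unique invariant measure μ, and let λ ∈ ℂ with |λ| = 1. (a) If u : X → ℂ is continuous, not identically zero, and satisfies u(T x) = λ·u(x) for all x ∈ X, then there is a constant c > 0 with |u(x)| = c for all x ∈ X. (b) If u₁, u₂ : X → ℂ are continuous, neither identically zero, and satisfy uᵢ(T x) = λ·uᵢ(x) for all x ∈ X (i = 1, 2), then there exists c ∈ ℂ with u₂ = c·u₁; in particular each peripheral eigenspace of the induced map on C(X) is one-dimensional and spanned by a unimodular function. -/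
open MeasureTheory Filter Set Topology TopologicalSpace BoundedContinuousFunction NNReal ENNReal

set_option linter.unusedSectionVars false

noncomputable section KBAux

variable {X : Type*} [TopologicalSpace X] [CompactSpace X] [T2Space X]

/-- Cesàro averages of `f` along the orbit of `x₀`. -/
def kbAvg (T : X → X) (x₀ : X) (f : X →ᵇ ℝ≥0) (n : ℕ) : ℝ≥0 :=
  (n : ℝ≥0)⁻¹ * ∑ k ∈ Finset.range n, f (T^[k] x₀)

lemma kbBound (f : X →ᵇ ℝ≥0) : ∃ C : ℝ≥0, ∀ x, f x ≤ C := by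
  obtain ⟨C, hC⟩ := (isCompact_range f.continuous).bddAbove
  exact ⟨C, fun x => hC (mem_range_self x)⟩

lemma kbAvg_le (T : X → X) (x₀ : X) (f : X →ᵇ ℝ≥0) {C : ℝ≥0} (hC : ∀ x, f x ≤ C) (n : ℕ) :
    kbAvg T x₀ f n ≤ C := by
  rcases Nat.eq_zero_or_pos n with h | h
  · simp [kbAvg, h]
  · have hsum : ∑ k ∈ Finset.range n, f (T^[k] x₀) ≤ (n : ℝ≥0) * C := by
      calc ∑ k ∈ Finset.range n, f (T^[k] x₀) ≤ ∑ _k ∈ Finset.range n, C :=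
            Finset.sum_le_sum fun k _ => hC _
        _ = (n : ℝ≥0) * C := by simp [Finset.sum_const, nsmul_eq_mul]
    calc kbAvg T x₀ f n ≤ (n : ℝ≥0)⁻¹ * ((n : ℝ≥0) * C) := mul_le_mul_right hsum _
      _ = C := by
        rw [← mul_assoc, inv_mul_cancel₀ (by exact_mod_cast h.ne' : (n : ℝ≥0) ≠ 0), one_mul]

lemma kbAvg_exists_lim (T : X → X) (x₀ : X) (f : X →ᵇ ℝ≥0) :
    ∃ l : ℝ≥0, Tendsto (kbAvg T x₀ f) (Ultrafilter.of (atTop : Filter ℕ)) (𝓝 l) := by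
  obtain ⟨C, hC⟩ := kbBound f
  have hs : IsCompact (Icc (0 : ℝ≥0) C) := isCompact_Icc
  have hle : ↑(Ultrafilter.map (kbAvg T x₀ f) (Ultrafilter.of atTop)) ≤ 𝓟 (Icc (0:ℝ≥0) C) := by
    rw [le_principal_iff]
    exact Filter.mem_map.mpr
      (Filter.Eventually.of_forall fun n => ⟨zero_le, kbAvg_le T x₀ f hC n⟩)
  obtain ⟨l, -, hl⟩ := hs.ultrafilter_le_nhds _ hle
  rw [Ultrafilter.coe_map] at hl
  exact ⟨l, hl⟩

/-- The "ultrafilter Cesàro limit" functional. -/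
def kbLam (T : X → X) (x₀ : X) (f : X →ᵇ ℝ≥0) : ℝ≥0 := (kbAvg_exists_lim T x₀ f).choose

lemma kbLam_tendsto (T : X → X) (x₀ : X) (f : X →ᵇ ℝ≥0) :
    Tendsto (kbAvg T x₀ f) (Ultrafilter.of (atTop : Filter ℕ)) (𝓝 (kbLam T x₀ f)) :=
  (kbAvg_exists_lim T x₀ f).choose_spec

lemma kbLam_eq (T : X → X) (x₀ : X) {f : X →ᵇ ℝ≥0} {l : ℝ≥0}
    (h : Tendsto (kbAvg T x₀ f) (Ultrafilter.of (atTop : Filter ℕ)) (𝓝 l)) :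
    kbLam T x₀ f = l :=
  tendsto_nhds_unique (kbLam_tendsto T x₀ f) h

lemma kbLam_add (T : X → X) (x₀ : X) (f g : X →ᵇ ℝ≥0) :
    kbLam T x₀ (f + g) = kbLam T x₀ f + kbLam T x₀ g := by
  apply kbLam_eq
  have h : (kbAvg T x₀ (f + g)) = fun n => kbAvg T x₀ f n + kbAvg T x₀ g n := by
    funext n
    simp [kbAvg, Finset.sum_add_distrib, mul_add]
  rw [h]
  exact (kbLam_tendsto T x₀ f).add (kbLam_tendsto T x₀ g)

lemma kbLam_smul (T : X → X) (x₀ : X) (c : ℝ≥0) (f : X →ᵇ ℝ≥0) :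
    kbLam T x₀ (c • f) = c * kbLam T x₀ f := by
  apply kbLam_eq
  have h : (kbAvg T x₀ (c • f)) = fun n => c * kbAvg T x₀ f n := by
    funext n
    simp [kbAvg, Finset.mul_sum, mul_left_comm]
  rw [h]
  exact (kbLam_tendsto T x₀ f).const_mul c

lemma kbLam_mono (T : X → X) (x₀ : X) {f g : X →ᵇ ℝ≥0} (h : ∀ x, f x ≤ g x) :
    kbLam T x₀ f ≤ kbLam T x₀ g := by
  refine le_of_tendsto_of_tendsto' (kbLam_tendsto T x₀ f) (kbLam_tendsto T x₀ g) fun n => ?_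
  exact mul_le_mul_right (Finset.sum_le_sum fun k _ => h _) _

lemma kbLam_one (T : X → X) (x₀ : X) : kbLam T x₀ 1 = 1 := by
  apply kbLam_eq
  have h1 : ∀ᶠ n in (atTop : Filter ℕ), kbAvg T x₀ (1 : X →ᵇ ℝ≥0) n = 1 := by
    filter_upwards [eventually_ge_atTop 1] with n hn
    have hn' : (n : ℝ≥0) ≠ 0 := by exact_mod_cast (Nat.one_le_iff_ne_zero.mp hn)
    simp [kbAvg, Finset.sum_const, nsmul_eq_mul, inv_mul_cancel₀ hn']
  have h2 : (kbAvg T x₀ (1 : X →ᵇ ℝ≥0)) =ᶠ[(Ultrafilter.of (atTop : Filter ℕ) : Filter ℕ)]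
      (fun _ => 1) := (Ultrafilter.of_le _) h1
  exact tendsto_const_nhds.congr' h2.symm

lemma kbLam_zero_of_orbit (T : X → X) (x₀ : X) {f : X →ᵇ ℝ≥0}
    (h : ∀ k, f (T^[k] x₀) = 0) : kbLam T x₀ f = 0 := by
  apply kbLam_eq
  have h1 : (kbAvg T x₀ f) = fun _ => 0 := by
    funext n
    simp [kbAvg, h]
  rw [h1]
  exact tendsto_const_nhds

/-- Tail terms divided by `n` tend to zero. -/
lemma kbSmallTendsto (f : X →ᵇ ℝ≥0) (y : ℕ → X) :
    Tendsto (fun n : ℕ => (n : ℝ≥0)⁻¹ * f (y n)) atTop (𝓝 0) := by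
  obtain ⟨C, hC⟩ := kbBound f
  have hb : Tendsto (fun n : ℕ => (n : ℝ≥0)⁻¹ * C) atTop (𝓝 0) := by
    rw [← NNReal.tendsto_coe]
    simpa using ((tendsto_inv_atTop_nhds_zero_nat (𝕜 := ℝ)).mul_const (C : ℝ))
  exact tendsto_of_tendsto_of_tendsto_of_le_of_le tendsto_const_nhds hb
    (fun n => zero_le) (fun n => mul_le_mul_right (hC _) _)

/-- Shift invariance of the Cesàro-limit functional. -/
lemma kbLam_comp (T : X → X) (hT : Continuous T) (x₀ : X) (f : X →ᵇ ℝ≥0) :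
    kbLam T x₀ (f.compContinuous ⟨T, hT⟩) = kbLam T x₀ f := by
  have key : ∀ n : ℕ, kbAvg T x₀ (f.compContinuous ⟨T, hT⟩) n + (n : ℝ≥0)⁻¹ * f x₀
      = kbAvg T x₀ f n + (n : ℝ≥0)⁻¹ * f (T^[n] x₀) := by
    intro n
    unfold kbAvg
    rw [← mul_add, ← mul_add]
    congr 1
    have e1 := Finset.sum_range_succ' (fun k => f (T^[k] x₀)) n
    have e2 := Finset.sum_range_succ (fun k => f (T^[k] x₀)) n
    have h1 : ∀ k ∈ Finset.range n,
        (f.compContinuous ⟨T, hT⟩) (T^[k] x₀) = f (T^[k+1] x₀) := by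
      intro k _
      simp [Function.iterate_succ_apply']
    rw [Finset.sum_congr rfl h1]
    have h2 : (∑ k ∈ Finset.range n, f (T^[k+1] x₀)) + f (T^[0] x₀)
        = (∑ k ∈ Finset.range n, f (T^[k] x₀)) + f (T^[n] x₀) := by
      rw [← e1, e2]
    simpa using h2
  have hU : (Ultrafilter.of (atTop : Filter ℕ) : Filter ℕ) ≤ atTop := Ultrafilter.of_le _
  have t1 : Tendsto (fun n : ℕ => kbAvg T x₀ (f.compContinuous ⟨T, hT⟩) n + (n : ℝ≥0)⁻¹ * f x₀)
      (Ultrafilter.of (atTop : Filter ℕ)) (𝓝 (kbLam T x₀ (f.compContinuous ⟨T, hT⟩) + 0)) :=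
    (kbLam_tendsto T x₀ _).add ((kbSmallTendsto f (fun _ => x₀)).mono_left hU)
  have t2 : Tendsto (fun n : ℕ => kbAvg T x₀ f n + (n : ℝ≥0)⁻¹ * f (T^[n] x₀))
      (Ultrafilter.of (atTop : Filter ℕ)) (𝓝 (kbLam T x₀ f + 0)) :=
    (kbLam_tendsto T x₀ f).add ((kbSmallTendsto f (fun n => T^[n] x₀)).mono_left hU)
  have t1' := t1.congr (fun n => key n)
  have := tendsto_nhds_unique t1' t2
  simpa using this

/-- The Cesàro-limit functional as a linear map. -/
def kbLamL (T : X → X) (x₀ : X) : (X →ᵇ ℝ≥0) →ₗ[ℝ≥0] ℝ≥0 where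
  toFun := kbLam T x₀
  map_add' := kbLam_add T x₀
  map_smul' := kbLam_smul T x₀

/-- The Cesàro-limit functional on compactly supported functions. -/
def kbLamC (T : X → X) (x₀ : X) : CompactlySupportedContinuousMap X ℝ≥0 →ₗ[ℝ≥0] ℝ≥0 where
  toFun f := kbLam T x₀ f.toBoundedContinuousFunction
  map_add' f g := by
    show kbLam T x₀ _ = kbLam T x₀ _ + kbLam T x₀ _
    rw [← kbLam_add]
    exact congrArg _ (BoundedContinuousFunction.ext fun _ => rfl)
  map_smul' c f := by
    show kbLam T x₀ _ = c * kbLam T x₀ _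
    rw [← kbLam_smul]
    exact congrArg _ (BoundedContinuousFunction.ext fun _ => rfl)

lemma kbLamC_mono (T : X → X) (x₀ : X) {f g : CompactlySupportedContinuousMap X ℝ≥0} (h : ∀ x, f x ≤ g x) :
    kbLamC T x₀ f ≤ kbLamC T x₀ g := kbLam_mono T x₀ h

lemma kbApply (μ : Content X) (K : Compacts X) : μ K = (μ.toFun K : ℝ≥0∞) := rfl

/-- truncation of a real continuous function to `CompactlySupportedContinuousMap X ℝ≥0` -/
def kbToC (g : C(X, ℝ)) : CompactlySupportedContinuousMap X ℝ≥0 :=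
  CompactlySupportedContinuousMap.continuousMapEquiv
    ⟨fun x => Real.toNNReal (g x), continuous_real_toNNReal.comp g.continuous⟩

/-- truncation of a real continuous function to `X →ᵇ ℝ≥0` -/
def kbToNN (g : C(X, ℝ)) : X →ᵇ ℝ≥0 :=
  mkOfCompact ⟨fun x => Real.toNNReal (g x), continuous_real_toNNReal.comp g.continuous⟩

/-- The content associated with the Cesàro-limit functional. -/
def kbContent (T : X → X) (x₀ : X) : Content X where
  toFun := rieszContentAux (kbLamC T x₀)
  mono' := fun _ _ h => rieszContentAux_mono (kbLamC T x₀) h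
  sup_le' := fun K₁ K₂ => rieszContentAux_sup_le (kbLamC T x₀) K₁ K₂
  sup_disjoint' := by
    intro K₁ K₂ hd h₁ h₂
    set L := kbLamC T x₀
    refine le_antisymm (rieszContentAux_sup_le L K₁ K₂) ?_
    obtain ⟨g, hg0, hg1, hg01⟩ := exists_continuous_zero_one_of_isClosed h₂ h₁ hd.symm
    refine le_csInf (rieszContentAux_image_nonempty L (K₁ ⊔ K₂)) ?_
    rintro b ⟨f, hf, rfl⟩
    set t : X →ᵇ ℝ≥0 := kbToNN g
    have ht1 : ∀ x, t x ≤ 1 := fun x => by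
      show Real.toNNReal (g x) ≤ 1
      exact Real.toNNReal_le_one.mpr (hg01 x).2
    set q₁ : CompactlySupportedContinuousMap X ℝ≥0 := CompactlySupportedContinuousMap.continuousMapEquiv
      ⟨fun x => f x * t x, by continuity⟩
    set q₂ : CompactlySupportedContinuousMap X ℝ≥0 := CompactlySupportedContinuousMap.continuousMapEquiv
      ⟨fun x => f x * (1 - t x), by continuity⟩
    have hsum : q₁ + q₂ = f := by
      refine CompactlySupportedContinuousMap.ext fun x => ?_
      show f x * t x + f x * (1 - t x) = f x
      rw [← mul_add, add_tsub_cancel_of_le (ht1 x), mul_one]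
    have hq₁ : ∀ x ∈ K₁, 1 ≤ q₁ x := by
      intro x hx
      have ht : t x = 1 := by
        show Real.toNNReal (g x) = 1
        rw [hg1 hx]; simp
      show 1 ≤ f x * t x
      rw [ht, mul_one]
      exact hf x (Or.inl hx)
    have hq₂ : ∀ x ∈ K₂, 1 ≤ q₂ x := by
      intro x hx
      have ht : t x = 0 := by
        show Real.toNNReal (g x) = 0
        rw [hg0 hx]; simp
      show 1 ≤ f x * (1 - t x)
      rw [ht, tsub_zero, mul_one]
      exact hf x (Or.inr hx)
    calc rieszContentAux L K₁ + rieszContentAux L K₂ ≤ L q₁ + L q₂ :=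
          add_le_add (rieszContentAux_le L hq₁) (rieszContentAux_le L hq₂)
      _ = L (q₁ + q₂) := (map_add L q₁ q₂).symm
      _ = L f := by rw [hsum]

variable [MeasurableSpace X] [BorelSpace X]

/-- The Krylov–Bogolyubov measure at `x₀`. -/
def kbMeasure (T : X → X) (x₀ : X) : Measure X := (kbContent T x₀).measure

lemma kbLamL_mono (T : X → X) (x₀ : X) {f g : X →ᵇ ℝ≥0} (h : ∀ x, f x ≤ g x) :
    kbLamL T x₀ f ≤ kbLamL T x₀ g := kbLam_mono T x₀ h

lemma kbMeasure_univ (T : X → X) (x₀ : X) : kbMeasure T x₀ univ = 1 := by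
  have hone : kbLamC T x₀ (CompactlySupportedContinuousMap.continuousMapEquiv 1) = 1 := by
    show kbLam T x₀ _ = 1
    rw [← kbLam_one T x₀]
    exact congrArg _ (BoundedContinuousFunction.ext fun _ => rfl)
  have hcont : (kbContent T x₀).toFun ⟨univ, isCompact_univ⟩ = 1 := by
    refine le_antisymm ?_ ?_
    · have h := rieszContentAux_le (kbLamC T x₀) (K := ⟨univ, isCompact_univ⟩)
        (f := CompactlySupportedContinuousMap.continuousMapEquiv 1)
        (fun x _ => le_refl _)
      rw [hone] at h
      exact h
    · refine le_csInf (rieszContentAux_image_nonempty (kbLamC T x₀) _) ?_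
      rintro b ⟨f, hf, rfl⟩
      rw [← hone]
      exact kbLamC_mono T x₀ fun x => by simpa using hf x trivial
  rw [kbMeasure, Content.measure_apply _ MeasurableSet.univ,
    Content.outerMeasure_of_isOpen _ univ isOpen_univ]
  refine le_antisymm (iSup₂_le fun K _ => ?_) ?_
  · have h := (kbContent T x₀).mono K ⟨univ, isCompact_univ⟩ (subset_univ _)
    refine h.trans_eq ?_
    rw [kbApply, hcont]
    simp
  · have h := Content.le_innerContent (kbContent T x₀) ⟨univ, isCompact_univ⟩
      ⟨univ, isOpen_univ⟩ (subset_univ _)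
    refine le_trans ?_ h
    rw [kbApply, hcont]
    simp

instance kbMeasure_prob (T : X → X) (x₀ : X) : IsProbabilityMeasure (kbMeasure T x₀) :=
  ⟨kbMeasure_univ T x₀⟩

instance kbMeasure_regular (T : X → X) (x₀ : X) : (kbMeasure T x₀).Regular :=
  Content.regular _

lemma kbMeasure_preimage_le (T : X → X) (hT : Continuous T) (x₀ : X)
    {U : Set X} (hU : IsOpen U) :
    kbMeasure T x₀ (T ⁻¹' U) ≤ kbMeasure T x₀ U := by
  set L := kbLamC T x₀
  rw [kbMeasure, Content.measure_apply _ (hU.preimage hT).measurableSet,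
    Content.measure_apply _ hU.measurableSet,
    Content.outerMeasure_of_isOpen _ U hU,
    Content.outerMeasure_of_isOpen _ (T ⁻¹' U) (hU.preimage hT)]
  refine iSup₂_le fun K hK => ?_
  have h1 : rieszContentAux L K ≤ rieszContentAux L (K.map T hT) := by
    refine le_csInf (rieszContentAux_image_nonempty L _) ?_
    rintro b ⟨f, hf, rfl⟩
    have hf' : ∀ x ∈ K, (1:ℝ≥0) ≤ (CompactlySupportedContinuousMap.continuousMapEquiv
        ((f : C(X, ℝ≥0)).comp ⟨T, hT⟩)) x := by
      intro x hx
      have hmem : T x ∈ (K.map T hT : Set X) := by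
        rw [Compacts.coe_map]
        exact mem_image_of_mem T hx
      exact hf _ hmem
    exact (rieszContentAux_le L hf').trans (le_of_eq (by
      show kbLam T x₀ _ = kbLam T x₀ _
      rw [← kbLam_comp T hT x₀ f.toBoundedContinuousFunction]
      exact congrArg _ (BoundedContinuousFunction.ext fun _ => rfl)))
  have h2 := Content.le_innerContent (kbContent T x₀) (K.map T hT) ⟨U, hU⟩
      (by rw [Compacts.coe_map]; exact image_subset_iff.mpr hK)
  refine le_trans ?_ h2
  rw [kbApply, kbApply]
  exact_mod_cast h1

lemma kbMeasure_map (T : X → X) (hT : Continuous T) (x₀ : X) :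
    Measure.map T (kbMeasure T x₀) = kbMeasure T x₀ := by
  have hm : Measurable T := hT.measurable
  set ν := kbMeasure T x₀ with hν
  have hle : ∀ A : Set X, MeasurableSet A → Measure.map T ν A ≤ ν A := by
    intro A hA
    by_contra hcon
    push_neg at hcon
    obtain ⟨U, hAU, hUopen, hU⟩ := A.exists_isOpen_lt_of_lt _ hcon
    have h1 : Measure.map T ν A ≤ ν (T ⁻¹' U) := by
      rw [Measure.map_apply hm hA]
      exact measure_mono (preimage_mono hAU)
    exact absurd (h1.trans (kbMeasure_preimage_le T hT x₀ hUopen)) (not_le.mpr hU)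
  have hmapprob : IsProbabilityMeasure (Measure.map T ν) :=
    Measure.isProbabilityMeasure_map hm.aemeasurable
  ext A hA
  refine le_antisymm (hle A hA) ?_
  by_contra hcon
  push_neg at hcon
  have h1 : Measure.map T ν A + Measure.map T ν Aᶜ = 1 := by
    rw [measure_add_measure_compl hA]
    exact measure_univ
  have h2 : ν A + ν Aᶜ = 1 := by
    rw [measure_add_measure_compl hA]
    exact measure_univ
  have hstrict : Measure.map T ν A + Measure.map T ν Aᶜ < ν A + ν Aᶜ :=
    ENNReal.add_lt_add_of_lt_of_le (measure_ne_top _ _) hcon (hle Aᶜ hA.compl)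
  rw [h1, h2] at hstrict
  exact lt_irrefl _ hstrict

lemma kbMeasure_compl_zero (T : X → X) (x₀ : X) (K : Set X) (hK : IsClosed K)
    (hinv : MapsTo T K K) (hx₀ : x₀ ∈ K) :
    kbMeasure T x₀ Kᶜ = 0 := by
  set L := kbLamC T x₀
  rw [kbMeasure, Content.measure_apply _ hK.measurableSet.compl,
    Content.outerMeasure_of_isOpen _ Kᶜ hK.isOpen_compl]
  refine le_antisymm (iSup₂_le fun C hC => ?_) zero_le
  obtain ⟨g, hg0, hg1, hg01⟩ := exists_continuous_zero_one_of_isClosed hK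
    C.isCompact.isClosed (disjoint_compl_right.mono_right hC)
  have hL : L (kbToC g) = 0 := by
    refine kbLam_zero_of_orbit T x₀ fun k => ?_
    have hk : T^[k] x₀ ∈ K := hinv.iterate k hx₀
    show Real.toNNReal (g (T^[k] x₀)) = 0
    rw [hg0 hk]; simp
  have h1 : rieszContentAux L C ≤ 0 := by
    have hf : ∀ x ∈ C, (1:ℝ≥0) ≤ kbToC g x := by
      intro x hx
      show (1:ℝ≥0) ≤ Real.toNNReal (g x)
      rw [hg1 hx]; simp
    exact (rieszContentAux_le L hf).trans hL.le
  rw [kbApply]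
  exact_mod_cast h1

end KBAux

/-- For a uniquely ergodic system `(X, T, μ)` and unimodular `λ`: (a) any nonzero continuous
eigenfunction with eigenvalue `λ` has constant nonzero modulus; (b) any two nonzero continuous
eigenfunctions with eigenvalue `λ` are proportional (each peripheral eigenspace of the induced
map on `C(X)` is one-dimensional, spanned by a unimodular function). -/
theorem stmt9 {X : Type*} [TopologicalSpace X] [CompactSpace X] [T2Space X] [Nonempty X]
    [MeasurableSpace X] [BorelSpace X]
    (T : X → X) (hT : Continuous T)
    (μ : Measure X) [IsProbabilityMeasure μ] [μ.Regular] (hμ : Measure.map T μ = μ)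
    (huniq : ∀ ν : Measure X, IsProbabilityMeasure ν → ν.Regular →
      Measure.map T ν = ν → ν = μ)
    (lam : ℂ) (hlam : ‖lam‖ = 1) :
    (∀ u : X → ℂ, Continuous u → (¬ ∀ x, u x = 0) → (∀ x, u (T x) = lam * u x) →
      ∃ c : ℝ, 0 < c ∧ ∀ x, ‖u x‖ = c) ∧
    (∀ u₁ u₂ : X → ℂ, Continuous u₁ → Continuous u₂ →
      (¬ ∀ x, u₁ x = 0) → (¬ ∀ x, u₂ x = 0) →
      (∀ x, u₁ (T x) = lam * u₁ x) → (∀ x, u₂ (T x) = lam * u₂ x) →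
      ∃ c : ℂ, ∀ x, u₂ x = c * u₁ x) := by
  -- Key consequence of unique ergodicity (via the Krylov–Bogolyubov construction):
  -- every continuous invariant real function is constant.
  have hKB : ∀ (K : Set X), IsClosed K → Set.MapsTo T K K → K.Nonempty → μ Kᶜ = 0 := by
    intro K hK hinv ⟨x₀, hx₀⟩
    have hν := huniq (kbMeasure T x₀) (kbMeasure_prob T x₀) (kbMeasure_regular T x₀)
      (kbMeasure_map T hT x₀)
    rw [← hν]
    exact kbMeasure_compl_zero T x₀ K hK hinv hx₀
  have key : ∀ F : X → ℝ, Continuous F → (∀ x, F (T x) = F x) → ∀ x y, F x = F y := by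
    intro F hF hinv
    obtain ⟨z₁, -, hz₁⟩ := isCompact_univ.exists_isMaxOn univ_nonempty hF.continuousOn
    obtain ⟨z₂, -, hz₂⟩ := isCompact_univ.exists_isMinOn univ_nonempty hF.continuousOn
    have hMm : F z₁ = F z₂ := by
      by_contra hne
      have h1 : μ (F ⁻¹' {F z₁})ᶜ = 0 := by
        refine hKB _ (isClosed_singleton.preimage hF) ?_ ⟨z₁, rfl⟩
        intro x hx
        simp only [mem_preimage, mem_singleton_iff] at hx ⊢
        rw [hinv x, hx]
      have h2 : μ (F ⁻¹' {F z₂})ᶜ = 0 := by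
        refine hKB _ (isClosed_singleton.preimage hF) ?_ ⟨z₂, rfl⟩
        intro x hx
        simp only [mem_preimage, mem_singleton_iff] at hx ⊢
        rw [hinv x, hx]
      have hcover : (univ : Set X) ⊆ (F ⁻¹' {F z₁})ᶜ ∪ (F ⁻¹' {F z₂})ᶜ := by
        intro x _
        by_contra hx
        simp only [mem_union, mem_compl_iff, mem_preimage, mem_singleton_iff,
          not_or, not_not] at hx
        exact hne (hx.1 ▸ hx.2 ▸ rfl)
      have : (1 : ℝ≥0∞) ≤ 0 := by
        calc (1 : ℝ≥0∞) = μ univ := measure_univ.symm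
          _ ≤ μ ((F ⁻¹' {F z₁})ᶜ ∪ (F ⁻¹' {F z₂})ᶜ) := measure_mono hcover
          _ ≤ μ (F ⁻¹' {F z₁})ᶜ + μ (F ⁻¹' {F z₂})ᶜ := measure_union_le _ _
          _ = 0 := by rw [h1, h2, add_zero]
      simp at this
    have hconst : ∀ x, F x = F z₁ := fun x =>
      le_antisymm (hz₁ (mem_univ x)) (by rw [hMm]; exact hz₂ (mem_univ x))
    intro x y
    rw [hconst x, hconst y]
  have parta : ∀ u : X → ℂ, Continuous u → (¬ ∀ x, u x = 0) → (∀ x, u (T x) = lam * u x) →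
      ∃ c : ℝ, 0 < c ∧ ∀ x, ‖u x‖ = c := by
    intro u hu hne heig
    push_neg at hne
    obtain ⟨x₁, hx₁⟩ := hne
    have hinv : ∀ x, ‖u (T x)‖ = ‖u x‖ := by
      intro x
      rw [heig x, norm_mul, hlam, one_mul]
    refine ⟨‖u x₁‖, norm_pos_iff.mpr hx₁, fun x => ?_⟩
    exact key (fun x => ‖u x‖) (hu.norm) hinv x x₁
  refine ⟨parta, ?_⟩
  intro u₁ u₂ hu₁ hu₂ hne₁ hne₂ heig₁ heig₂
  obtain ⟨c₁, hc₁pos, hc₁⟩ := parta u₁ hu₁ hne₁ heig₁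
  have hnz : ∀ x, u₁ x ≠ 0 := by
    intro x h
    have h0 : c₁ = 0 := by rw [← hc₁ x, h, norm_zero]
    exact hc₁pos.ne' h0
  have hlam0 : lam ≠ 0 := by
    intro h
    rw [h, norm_zero] at hlam
    norm_num at hlam
  set w : X → ℂ := fun x => u₂ x / u₁ x with hw
  have hwcont : Continuous w := hu₂.div hu₁ hnz
  have hwinv : ∀ x, w (T x) = w x := by
    intro x
    show u₂ (T x) / u₁ (T x) = u₂ x / u₁ x
    rw [heig₁ x, heig₂ x, mul_div_mul_left _ _ hlam0]
  have hre := key (fun x => (w x).re) (Complex.continuous_re.comp hwcont)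
    (fun x => congrArg Complex.re (hwinv x))
  have him := key (fun x => (w x).im) (Complex.continuous_im.comp hwcont)
    (fun x => congrArg Complex.im (hwinv x))
  obtain ⟨x₁⟩ := ‹Nonempty X›
  refine ⟨w x₁, fun x => ?_⟩
  have hwx : w x = w x₁ := Complex.ext (hre x x₁) (him x x₁)
  calc u₂ x = w x * u₁ x := (div_mul_cancel₀ _ (hnz x)).symm
    _ = w x₁ * u₁ x := by rw [hwx]
end

section
/- Let (X, T) be a uniquely ergodic classical dynamical system with unique invariant measure μ, let λ ∈ ℂ with |λ| = 1, and let u : X → ℂ be continuous, not identically zero, with u(T x) = λ·u(x) for all x ∈ X. Then the class of u in L²(X, μ) is a nonzero eigenvector of the Koopman operator with eigenvalue λ: one has ‖u‖_{L²(μ)} > 0 and u∘T = λ·u μ-almost everywhere. In particular, every continuous peripheral eigenvalue of the system is also a peripheral eigenvalue of the Koopman operator on L²(X, μ). -/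
open MeasureTheory Filter Set TopologicalSpace
open scoped NNReal ENNReal

section BirkhoffAux

variable {X : Type*} [TopologicalSpace X] [CompactSpace X] [T2Space X]
variable (T : X → X) (x₀ : X) (𝒰 : Ultrafilter ℕ)

/-- Birkhoff averages of `f` along the forward orbit of `x₀`. -/
noncomputable def birkAvg (f : X → ℝ) (n : ℕ) : ℝ :=
  (∑ k ∈ Finset.range (n + 1), f (T^[k] x₀)) / (n + 1)

lemma birkAvg_mem {f : X → ℝ} {a b : ℝ} (hf : ∀ x, f x ∈ Icc a b) (n : ℕ) :
    birkAvg T x₀ f n ∈ Icc a b := by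
  have hpos : (0 : ℝ) < (n : ℝ) + 1 := by positivity
  unfold birkAvg
  constructor
  · rw [le_div_iff₀ hpos]
    calc a * ((n : ℝ) + 1) = ∑ _k ∈ Finset.range (n + 1), a := by
          rw [Finset.sum_const, Finset.card_range]; push_cast; ring
      _ ≤ _ := Finset.sum_le_sum fun k _ => (hf _).1
  · rw [div_le_iff₀ hpos]
    calc ∑ k ∈ Finset.range (n + 1), f (T^[k] x₀)
          ≤ ∑ _k ∈ Finset.range (n + 1), b := Finset.sum_le_sum fun k _ => (hf _).2
      _ = b * ((n : ℝ) + 1) := by rw [Finset.sum_const, Finset.card_range]; push_cast; ring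

/-- A generalized (ultrafilter) limit of the Birkhoff averages. -/
noncomputable def birkLim (f : X → ℝ) : ℝ :=
  limUnder 𝒰 (birkAvg T x₀ f)

lemma tendsto_birkAvg {f : X → ℝ} {a b : ℝ} (hf : ∀ x, f x ∈ Icc a b) :
    Tendsto (birkAvg T x₀ f) 𝒰 (nhds (birkLim T x₀ 𝒰 f)) := by
  apply le_nhds_lim
  obtain ⟨L, -, hL⟩ := (isCompact_Icc (a := a) (b := b)).ultrafilter_le_nhds
    (𝒰.map (birkAvg T x₀ f)) (by
      rw [le_principal_iff, Ultrafilter.mem_coe, Ultrafilter.mem_map]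
      exact Filter.mem_of_superset Filter.univ_mem fun n _ => birkAvg_mem T x₀ hf n)
  exact ⟨L, hL⟩

lemma birkLim_eq {f : X → ℝ} {a b L : ℝ} (hf : ∀ x, f x ∈ Icc a b)
    (hL : Tendsto (birkAvg T x₀ f) 𝒰 (nhds L)) : birkLim T x₀ 𝒰 f = L :=
  tendsto_nhds_unique (tendsto_birkAvg T x₀ 𝒰 hf) hL

lemma birkLim_one : birkLim T x₀ 𝒰 (fun _ => 1) = 1 := by
  refine birkLim_eq T x₀ 𝒰 (a := 1) (b := 1) (fun x => ⟨le_rfl, le_rfl⟩) ?_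
  have : birkAvg T x₀ (fun _ => (1 : ℝ)) = fun _ => (1 : ℝ) := by
    funext n
    have hpos : ((n : ℝ) + 1) ≠ 0 := by positivity
    simp [birkAvg, Finset.sum_const, Finset.card_range, div_self hpos]
  rw [this]
  exact tendsto_const_nhds

lemma birkLim_nonneg {f : X → ℝ} {b : ℝ} (hf : ∀ x, f x ∈ Icc 0 b) :
    0 ≤ birkLim T x₀ 𝒰 f :=
  ge_of_tendsto' (tendsto_birkAvg T x₀ 𝒰 hf) fun n => (birkAvg_mem T x₀ hf n).1

lemma birkLim_mono {f g : X → ℝ} {a b a' b' : ℝ} (hf : ∀ x, f x ∈ Icc a b)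
    (hg : ∀ x, g x ∈ Icc a' b') (h : ∀ x, f x ≤ g x) :
    birkLim T x₀ 𝒰 f ≤ birkLim T x₀ 𝒰 g := by
  refine le_of_tendsto_of_tendsto' (tendsto_birkAvg T x₀ 𝒰 hf)
    (tendsto_birkAvg T x₀ 𝒰 hg) fun n => ?_
  unfold birkAvg
  rw [div_le_div_iff_of_pos_right (by positivity : (0:ℝ) < (n:ℝ)+1)]
  exact Finset.sum_le_sum fun k _ => h _

lemma birkLim_add {f g : X → ℝ} {a b a' b' : ℝ} (hf : ∀ x, f x ∈ Icc a b)
    (hg : ∀ x, g x ∈ Icc a' b') :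
    birkLim T x₀ 𝒰 (fun x => f x + g x) = birkLim T x₀ 𝒰 f + birkLim T x₀ 𝒰 g := by
  refine birkLim_eq T x₀ 𝒰 (a := a + a') (b := b + b')
    (fun x => ⟨add_le_add (hf x).1 (hg x).1, add_le_add (hf x).2 (hg x).2⟩) ?_
  have : birkAvg T x₀ (fun x => f x + g x) = fun n => birkAvg T x₀ f n + birkAvg T x₀ g n := by
    funext n
    simp [birkAvg, Finset.sum_add_distrib, add_div]
  rw [this]
  exact (tendsto_birkAvg T x₀ 𝒰 hf).add (tendsto_birkAvg T x₀ 𝒰 hg)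

lemma birkLim_comp (h𝒰 : (𝒰 : Filter ℕ) ≤ atTop) {f : X → ℝ} {a b : ℝ}
    (hf : ∀ x, f x ∈ Icc a b) :
    birkLim T x₀ 𝒰 (fun x => f (T x)) = birkLim T x₀ 𝒰 f := by
  refine birkLim_eq T x₀ 𝒰 (a := a) (b := b) (fun x => hf (T x)) ?_
  set e : ℕ → ℝ := fun n => (f (T^[n + 1] x₀) - f x₀) / (n + 1) with he_def
  have heq : ∀ n, birkAvg T x₀ (fun x => f (T x)) n = birkAvg T x₀ f n + e n := by
    intro n
    have hshift : (∑ k ∈ Finset.range (n + 1), f (T^[k] (T x₀))) + f (T^[0] x₀)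
        = (∑ k ∈ Finset.range (n + 1), f (T^[k] x₀)) + f (T^[n + 1] x₀) := by
      have h1 := Finset.sum_range_succ' (fun k => f (T^[k] x₀)) (n + 1)
      have h2 := Finset.sum_range_succ (fun k => f (T^[k] x₀)) (n + 1)
      simp only [Function.iterate_succ_apply] at h1
      linarith [h1, h2]
    have hpos : ((n : ℝ) + 1) ≠ 0 := by positivity
    simp only [birkAvg, he_def]
    rw [← add_div]
    congr 1
    have hkey : ∀ k : ℕ, f (T (T^[k] x₀)) = f (T^[k] (T x₀)) := fun k => by
      rw [← Function.iterate_succ_apply' T k x₀, Function.iterate_succ_apply]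
    simp only [Function.iterate_zero_apply] at hshift
    simp only [hkey]
    linarith [hshift]
  have he0 : Tendsto e atTop (nhds 0) := by
    refine squeeze_zero_norm (a := fun n : ℕ => (|b - a| + |b - a|) / ((n:ℝ) + 1)) (fun n => ?_) ?_
    · 
      have hpos : (0 : ℝ) < (n : ℝ) + 1 := by positivity
      rw [he_def]
      simp only [norm_div, Real.norm_eq_abs, abs_of_pos hpos]
      have h1 := hf (T^[n+1] x₀)
      have h2 := hf x₀
      have h4 := le_abs_self (b - a)
      have h5 := abs_nonneg (b - a)
      rw [div_le_div_iff_of_pos_right hpos, abs_le]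
      constructor
      · linarith [h1.1, h1.2, h2.1, h2.2]
      · linarith [h1.1, h1.2, h2.1, h2.2]
    · have := tendsto_const_div_atTop_nhds_zero_nat (|b - a| + |b - a|)
      have h2 : Tendsto (fun n : ℕ => n + 1) atTop atTop := tendsto_add_atTop_nat 1
      have h3 := this.comp h2
      refine h3.congr fun n => ?_
      simp only [Function.comp_apply]
      push_cast
      ring
  have := ((tendsto_birkAvg T x₀ 𝒰 hf).add (he0.mono_left h𝒰))
  rw [add_zero] at this
  refine Tendsto.congr (fun n => (heq n).symm) this

lemma birkLim_ge_one {f : X → ℝ} {b : ℝ} (hf : ∀ x, f x ∈ Icc 0 b)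
    (h1 : ∀ k : ℕ, 1 ≤ f (T^[k] x₀)) : 1 ≤ birkLim T x₀ 𝒰 f := by
  refine ge_of_tendsto' (tendsto_birkAvg T x₀ 𝒰 hf) fun n => ?_
  unfold birkAvg
  rw [le_div_iff₀ (by positivity : (0:ℝ) < (n : ℝ) + 1)]
  calc (1 : ℝ) * ((n : ℝ) + 1) = ∑ _k ∈ Finset.range (n + 1), (1 : ℝ) := by
        rw [Finset.sum_const, Finset.card_range]; push_cast; ring
    _ ≤ _ := Finset.sum_le_sum fun k _ => h1 k

end BirkhoffAux

section ContentAux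

variable {X : Type*} [TopologicalSpace X] [CompactSpace X] [T2Space X]
variable (T : X → X) (x₀ : X) (𝒰 : Ultrafilter ℕ)

/-- Test functions for a set `K`: continuous, `[0,1]`-valued, equal to `1` on `K`. -/
def testFns (K : Set X) : Set C(X, ℝ) :=
  {f | (∀ x, f x ∈ Icc (0:ℝ) 1) ∧ ∀ x ∈ K, f x = 1}

lemma const_one_mem_testFns (K : Set X) : (ContinuousMap.const X 1) ∈ testFns K :=
  ⟨fun _ => ⟨zero_le_one, le_rfl⟩, fun _ _ => rfl⟩

/-- The set of generalized-limit values of test functions. -/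
noncomputable def rieszSet (K : Set X) : Set ℝ :=
  (fun f : C(X,ℝ) => birkLim T x₀ 𝒰 ⇑f) '' testFns K

lemma rieszSet_nonempty (K : Set X) : (rieszSet T x₀ 𝒰 K).Nonempty :=
  ⟨_, ContinuousMap.const X 1, const_one_mem_testFns K, rfl⟩

lemma rieszSet_bddBelow (K : Set X) : BddBelow (rieszSet T x₀ 𝒰 K) := by
  refine ⟨0, ?_⟩
  rintro r ⟨f, hf, rfl⟩
  exact birkLim_nonneg T x₀ 𝒰 hf.1

lemma rieszSet_sInf_nonneg (K : Set X) : 0 ≤ sInf (rieszSet T x₀ 𝒰 K) :=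
  le_csInf (rieszSet_nonempty T x₀ 𝒰 K) (by rintro r ⟨f, hf, rfl⟩; exact birkLim_nonneg T x₀ 𝒰 hf.1)

/-- The Riesz-type content associated to the generalized Birkhoff limit. -/
noncomputable def rContent (K : Compacts X) : ℝ≥0 :=
  Real.toNNReal (sInf (rieszSet T x₀ 𝒰 (K : Set X)))

lemma rieszSet_sInf_le {K : Set X} {f : C(X,ℝ)} (hf : f ∈ testFns K) :
    sInf (rieszSet T x₀ 𝒰 K) ≤ birkLim T x₀ 𝒰 ⇑f :=
  csInf_le (rieszSet_bddBelow T x₀ 𝒰 K) ⟨f, hf, rfl⟩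

lemma rContent_mono (K₁ K₂ : Compacts X) (h : (K₁ : Set X) ⊆ K₂) :
    rContent T x₀ 𝒰 K₁ ≤ rContent T x₀ 𝒰 K₂ := by
  apply Real.toNNReal_mono
  apply csInf_le_csInf (rieszSet_bddBelow T x₀ 𝒰 _) (rieszSet_nonempty T x₀ 𝒰 _)
  rintro r ⟨f, hf, rfl⟩
  exact ⟨f, ⟨hf.1, fun x hx => hf.2 x (h hx)⟩, rfl⟩

lemma rContent_sup_le (K₁ K₂ : Compacts X) :
    rContent T x₀ 𝒰 (K₁ ⊔ K₂) ≤ rContent T x₀ 𝒰 K₁ + rContent T x₀ 𝒰 K₂ := by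
  have key : ∀ f₁ ∈ testFns (K₁ : Set X), ∀ f₂ ∈ testFns (K₂ : Set X),
      sInf (rieszSet T x₀ 𝒰 ((K₁ ⊔ K₂ : Compacts X) : Set X))
        ≤ birkLim T x₀ 𝒰 ⇑f₁ + birkLim T x₀ 𝒰 ⇑f₂ := by
    intro f₁ hf₁ f₂ hf₂
    set h : C(X, ℝ) := f₁ + f₂ - f₁ * f₂ with hh
    have hmem : h ∈ testFns ((K₁ ⊔ K₂ : Compacts X) : Set X) := by
      constructor
      · intro x
        have h1 := hf₁.1 x
        have h2 := hf₂.1 x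
        simp only [hh, ContinuousMap.sub_apply, ContinuousMap.add_apply,
          ContinuousMap.mul_apply, mem_Icc] at h1 h2 ⊢
        constructor
        · nlinarith [h1.1, h1.2, h2.1, h2.2]
        · nlinarith [h1.1, h1.2, h2.1, h2.2]
      · intro x hx
        simp only [Compacts.coe_sup, mem_union] at hx
        simp only [hh, ContinuousMap.sub_apply, ContinuousMap.add_apply, ContinuousMap.mul_apply]
        rcases hx with hx | hx
        · rw [hf₁.2 x hx]; ring
        · rw [hf₂.2 x hx]; ring
    have hle : birkLim T x₀ 𝒰 ⇑h ≤ birkLim T x₀ 𝒰 ⇑f₁ + birkLim T x₀ 𝒰 ⇑f₂ := by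
      have hsum : birkLim T x₀ 𝒰 (fun x => f₁ x + f₂ x)
          = birkLim T x₀ 𝒰 ⇑f₁ + birkLim T x₀ 𝒰 ⇑f₂ :=
        birkLim_add T x₀ 𝒰 hf₁.1 hf₂.1
      rw [← hsum]
      refine birkLim_mono T x₀ 𝒰 (a := 0) (b := 1) (a' := 0) (b' := 2) hmem.1
        (fun x => ⟨by linarith [(hf₁.1 x).1, (hf₂.1 x).1],
                   by linarith [(hf₁.1 x).2, (hf₂.1 x).2]⟩)
        (fun x => ?_)
      have h1 := (hf₁.1 x).1
      have h2 := (hf₂.1 x).1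
      simp only [hh, ContinuousMap.sub_apply, ContinuousMap.add_apply, ContinuousMap.mul_apply]
      nlinarith
    exact (rieszSet_sInf_le T x₀ 𝒰 hmem).trans hle
  have hreal : sInf (rieszSet T x₀ 𝒰 ((K₁ ⊔ K₂ : Compacts X) : Set X))
      ≤ sInf (rieszSet T x₀ 𝒰 (K₁ : Set X)) + sInf (rieszSet T x₀ 𝒰 (K₂ : Set X)) := by
    refine le_of_forall_pos_le_add fun ε hε => ?_
    obtain ⟨r₁, hr₁mem, hr₁⟩ :=
      Real.lt_sInf_add_pos (rieszSet_nonempty T x₀ 𝒰 (K₁ : Set X)) (half_pos hε)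
    obtain ⟨r₂, hr₂mem, hr₂⟩ :=
      Real.lt_sInf_add_pos (rieszSet_nonempty T x₀ 𝒰 (K₂ : Set X)) (half_pos hε)
    obtain ⟨f₁, hf₁, rfl⟩ := hr₁mem
    obtain ⟨f₂, hf₂, rfl⟩ := hr₂mem
    have := key f₁ hf₁ f₂ hf₂
    linarith
  unfold rContent
  rw [← Real.toNNReal_add (rieszSet_sInf_nonneg T x₀ 𝒰 _) (rieszSet_sInf_nonneg T x₀ 𝒰 _)]
  exact Real.toNNReal_mono hreal

lemma rContent_sup_disjoint (K₁ K₂ : Compacts X) (hd : Disjoint (K₁ : Set X) (K₂ : Set X)) :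
    rContent T x₀ 𝒰 (K₁ ⊔ K₂) = rContent T x₀ 𝒰 K₁ + rContent T x₀ 𝒰 K₂ := by
  refine le_antisymm (rContent_sup_le T x₀ 𝒰 K₁ K₂) ?_
  have hreal : sInf (rieszSet T x₀ 𝒰 (K₁ : Set X)) + sInf (rieszSet T x₀ 𝒰 (K₂ : Set X))
      ≤ sInf (rieszSet T x₀ 𝒰 ((K₁ ⊔ K₂ : Compacts X) : Set X)) := by
    refine le_csInf (rieszSet_nonempty T x₀ 𝒰 _) ?_
    rintro r ⟨f, hf, rfl⟩
    obtain ⟨g, hg0, hg1, hg01⟩ := exists_continuous_zero_one_of_isClosed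
      K₂.isCompact.isClosed K₁.isCompact.isClosed hd.symm
    set p : C(X, ℝ) := f * g with hp
    set q : C(X, ℝ) := f - f * g with hq
    have hpmem : p ∈ testFns (K₁ : Set X) := by
      constructor
      · intro x
        have h1 := hf.1 x
        have h2 := hg01 x
        simp only [hp, ContinuousMap.mul_apply, mem_Icc] at h1 h2 ⊢
        constructor
        · nlinarith [h1.1, h2.1]
        · nlinarith [h1.1, h1.2, h2.1, h2.2]
      · intro x hx
        have hfx : f x = 1 := hf.2 x (by simp [Compacts.coe_sup]; exact Or.inl hx)
        have hgx : g x = 1 := hg1 hx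
        simp [hp, ContinuousMap.mul_apply, hfx, hgx]
    have hqmem : q ∈ testFns (K₂ : Set X) := by
      constructor
      · intro x
        have h1 := hf.1 x
        have h2 := hg01 x
        simp only [hq, ContinuousMap.sub_apply, ContinuousMap.mul_apply, mem_Icc] at h1 h2 ⊢
        constructor
        · nlinarith [h1.1, h1.2, h2.1, h2.2]
        · nlinarith [h1.1, h1.2, h2.1, h2.2]
      · intro x hx
        have hfx : f x = 1 := hf.2 x (by simp [Compacts.coe_sup]; exact Or.inr hx)
        have hgx : g x = 0 := hg0 hx
        simp [hq, ContinuousMap.sub_apply, ContinuousMap.mul_apply, hfx, hgx]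
    have hsum : birkLim T x₀ 𝒰 ⇑f = birkLim T x₀ 𝒰 ⇑p + birkLim T x₀ 𝒰 ⇑q := by
      have h1 : birkLim T x₀ 𝒰 (fun x => p x + q x)
          = birkLim T x₀ 𝒰 ⇑p + birkLim T x₀ 𝒰 ⇑q :=
        birkLim_add T x₀ 𝒰 hpmem.1 hqmem.1
      rw [← h1]
      congr 1
      funext x
      simp only [hp, hq, ContinuousMap.mul_apply, ContinuousMap.sub_apply]
      ring
    calc sInf (rieszSet T x₀ 𝒰 (K₁ : Set X)) + sInf (rieszSet T x₀ 𝒰 (K₂ : Set X))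
        ≤ birkLim T x₀ 𝒰 ⇑p + birkLim T x₀ 𝒰 ⇑q :=
          add_le_add (rieszSet_sInf_le T x₀ 𝒰 hpmem) (rieszSet_sInf_le T x₀ 𝒰 hqmem)
      _ = birkLim T x₀ 𝒰 ⇑f := hsum.symm
  unfold rContent
  rw [← Real.toNNReal_add (rieszSet_sInf_nonneg T x₀ 𝒰 _) (rieszSet_sInf_nonneg T x₀ 𝒰 _)]
  exact Real.toNNReal_mono hreal

lemma rContent_univ : rContent T x₀ 𝒰 ⊤ = 1 := by
  have h1 : sInf (rieszSet T x₀ 𝒰 ((⊤ : Compacts X) : Set X)) = 1 := by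
    refine le_antisymm ?_ ?_
    · have := rieszSet_sInf_le T x₀ 𝒰 (const_one_mem_testFns ((⊤ : Compacts X) : Set X))
      have h2 : birkLim T x₀ 𝒰 ⇑(ContinuousMap.const X (1:ℝ)) = 1 := by
        have : ⇑(ContinuousMap.const X (1:ℝ)) = fun _ : X => (1:ℝ) := rfl
        rw [this, birkLim_one]
      rwa [h2] at this
    · refine le_csInf (rieszSet_nonempty T x₀ 𝒰 _) ?_
      rintro r ⟨f, hf, rfl⟩
      exact birkLim_ge_one T x₀ 𝒰 hf.1 fun k => (hf.2 _ (by simp [Compacts.coe_top])).ge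
  unfold rContent
  rw [h1]
  simp

lemma rContent_le_of_preimage (hT : Continuous T) (h𝒰 : (𝒰 : Filter ℕ) ≤ atTop)
    (K K' : Compacts X) (h : (K : Set X) ⊆ T ⁻¹' (K' : Set X)) :
    rContent T x₀ 𝒰 K ≤ rContent T x₀ 𝒰 K' := by
  apply Real.toNNReal_mono
  refine le_csInf (rieszSet_nonempty T x₀ 𝒰 _) ?_
  rintro r ⟨f, hf, rfl⟩
  have hmem : f.comp ⟨T, hT⟩ ∈ testFns (K : Set X) := by
    constructor
    · intro x; exact hf.1 (T x)
    · intro x hx; exact hf.2 (T x) (h hx)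
  have hcomp : birkLim T x₀ 𝒰 ⇑(f.comp ⟨T, hT⟩) = birkLim T x₀ 𝒰 ⇑f := by
    have : ⇑(f.comp ⟨T, hT⟩) = fun x => f (T x) := rfl
    rw [this]
    exact birkLim_comp T x₀ 𝒰 h𝒰 hf.1
  calc sInf (rieszSet T x₀ 𝒰 (K : Set X)) ≤ birkLim T x₀ 𝒰 ⇑(f.comp ⟨T, hT⟩) :=
        rieszSet_sInf_le T x₀ 𝒰 hmem
    _ = birkLim T x₀ 𝒰 ⇑f := hcomp

lemma one_le_rContent_of_orbit (K : Compacts X) (horb : ∀ k : ℕ, T^[k] x₀ ∈ (K : Set X)) :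
    1 ≤ rContent T x₀ 𝒰 K := by
  rw [← Real.toNNReal_one]
  apply Real.toNNReal_mono
  refine le_csInf (rieszSet_nonempty T x₀ 𝒰 _) ?_
  rintro r ⟨f, hf, rfl⟩
  exact birkLim_ge_one T x₀ 𝒰 hf.1 fun k => (hf.2 _ (horb k)).ge

end ContentAux

/-- For a uniquely ergodic system `(X, T, μ)`, a nonzero continuous eigenfunction `u` with
unimodular eigenvalue `λ` yields a nonzero eigenvector of the Koopman operator on `L²(X, μ)`:
`‖u‖_{L²(μ)} > 0` and `u∘T = λ·u` μ-a.e. -/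
theorem stmt11 {X : Type*} [TopologicalSpace X] [CompactSpace X] [T2Space X] [Nonempty X]
    [MeasurableSpace X] [BorelSpace X]
    (T : X → X) (hT : Continuous T)
    (μ : Measure X) [IsProbabilityMeasure μ] [μ.Regular] (hμ : Measure.map T μ = μ)
    (huniq : ∀ ν : Measure X, IsProbabilityMeasure ν → ν.Regular →
      Measure.map T ν = ν → ν = μ)
    (lam : ℂ) (hlam : ‖lam‖ = 1)
    (u : X → ℂ) (hu : Continuous u) (hu0 : ¬ ∀ x, u x = 0)
    (heig : ∀ x, u (T x) = lam * u x) :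
    0 < eLpNorm u 2 μ ∧ ∀ᵐ x ∂μ, u (T x) = lam * u x := by
  refine ⟨?_, Filter.Eventually.of_forall heig⟩
  rw [pos_iff_ne_zero]
  intro hzero
  rw [eLpNorm_eq_zero_iff hu.aestronglyMeasurable (two_ne_zero)] at hzero
  have hV0 : μ {x | u x ≠ 0} = 0 := by
    have h := hzero
    rw [EventuallyEq, ae_iff] at h
    simpa using h
  obtain ⟨x₀, hx₀⟩ := not_forall.mp hu0
  obtain ⟨𝒰, h𝒰⟩ := Filter.exists_ultrafilter_le (atTop : Filter ℕ)
  have horbnorm : ∀ k : ℕ, ‖u (T^[k] x₀)‖ = ‖u x₀‖ := by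
    intro k
    induction k with
    | zero => rfl
    | succ n ih => rw [Function.iterate_succ_apply', heig, norm_mul, hlam, one_mul, ih]
  set K : Set X := closure (range fun k : ℕ => T^[k] x₀) with hK
  have hKcomp : IsCompact K := isClosed_closure.isCompact
  have hKnorm : ∀ x ∈ K, ‖u x‖ = ‖u x₀‖ := by
    have hsub : K ⊆ {x | ‖u x‖ = ‖u x₀‖} :=
      closure_minimal (by rintro _ ⟨k, rfl⟩; exact horbnorm k)
        (isClosed_eq (continuous_norm.comp hu) continuous_const)
    exact fun x hx => hsub hx
  have hKV : K ⊆ {x | u x ≠ 0} := by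
    intro x hx hx0
    have h := hKnorm x hx
    rw [hx0, norm_zero] at h
    exact hx₀ (by rwa [eq_comm, norm_eq_zero] at h)
  -- the content and the associated invariant measure
  let C : MeasureTheory.Content X :=
    { toFun := fun K => rContent T x₀ 𝒰 K
      mono' := rContent_mono T x₀ 𝒰
      sup_disjoint' := fun K₁ K₂ hd _ _ => rContent_sup_disjoint T x₀ 𝒰 K₁ K₂ hd
      sup_le' := fun K₁ K₂ => by exact_mod_cast rContent_sup_le T x₀ 𝒰 K₁ K₂ }
  let ν : Measure X := C.measure
  have hC_apply : ∀ Q : Compacts X, C Q = (rContent T x₀ 𝒰 Q : ℝ≥0∞) := fun _ => rfl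
  have hν_open : ∀ (U : Set X) (hU : IsOpen U), ν U = C.innerContent ⟨U, hU⟩ := by
    intro U hU
    rw [Content.measure_apply _ hU.measurableSet, C.outerMeasure_of_isOpen U hU]
  have hν_univ : ν univ = 1 := by
    rw [hν_open univ isOpen_univ,
      C.innerContent_of_isCompact (K := univ) isCompact_univ isOpen_univ]
    have htop : (⟨univ, isCompact_univ⟩ : Compacts X) = ⊤ := rfl
    rw [htop, hC_apply, rContent_univ]
    simp
  haveI hνprob : IsProbabilityMeasure ν := ⟨hν_univ⟩
  have hνreg : ν.Regular := C.regular
  have hTmeas : Measurable T := hT.measurable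
  have hle : ∀ s : Set X, MeasurableSet s → ν (T ⁻¹' s) ≤ ν s := by
    intro s hs
    have hopen : ∀ (U : Set X), IsOpen U → ν (T ⁻¹' U) ≤ ν U := by
      intro U hU
      rw [hν_open _ (hU.preimage hT), hν_open _ hU]
      refine iSup₂_le fun Q hQ => ?_
      have h1 : (Q : Set X) ⊆ T ⁻¹' (Q.map T hT : Set X) := by
        intro x hx
        exact mem_preimage.mpr (mem_image_of_mem T hx)
      have h2 : ((Q.map T hT : Compacts X) : Set X) ⊆ U := by
        rintro _ ⟨x, hx, rfl⟩
        exact hQ hx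
      calc C Q ≤ C (Q.map T hT) := by
            rw [hC_apply, hC_apply]
            exact_mod_cast rContent_le_of_preimage T x₀ 𝒰 hT h𝒰 Q (Q.map T hT) h1
        _ ≤ C.innerContent ⟨U, hU⟩ := C.le_innerContent _ _ h2
    rw [Set.measure_eq_iInf_isOpen s ν]
    refine le_iInf₂ fun U hsU => le_iInf fun hU => ?_
    exact le_trans (measure_mono (preimage_mono hsU)) (hopen U hU)
  have hinv : Measure.map T ν = ν := by
    refine Measure.ext fun s hs => ?_
    rw [Measure.map_apply hTmeas hs]
    have h2 := hle s hs
    have h3 := hle sᶜ hs.compl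
    rw [preimage_compl] at h3
    by_contra hne
    have hlt : ν (T ⁻¹' s) < ν s := lt_of_le_of_ne h2 hne
    have hsum : ν (T ⁻¹' s) + ν (T ⁻¹' s)ᶜ < ν s + ν sᶜ :=
      ENNReal.add_lt_add_of_lt_of_le
        (by exact ne_of_lt (lt_of_le_of_lt (measure_mono (subset_univ _)) (by rw [hν_univ]; exact ENNReal.one_lt_top)))
        hlt h3
    rw [measure_add_measure_compl (hTmeas hs), measure_add_measure_compl hs] at hsum
    exact lt_irrefl _ hsum
  have hνμ : ν = μ := huniq ν hνprob hνreg hinv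
  have hVopen : IsOpen {x | u x ≠ 0} := by
    have : {x | u x ≠ 0} = u ⁻¹' ({0}ᶜ) := rfl
    rw [this]
    exact (isOpen_compl_singleton).preimage hu
  have h1 : (1 : ℝ≥0∞) ≤ ν {x | u x ≠ 0} := by
    rw [hν_open _ hVopen]
    refine le_trans ?_ (C.le_innerContent ⟨K, hKcomp⟩ ⟨_, hVopen⟩ hKV)
    rw [hC_apply]
    exact_mod_cast one_le_rContent_of_orbit T x₀ 𝒰 ⟨K, hKcomp⟩
      (fun k => subset_closure (mem_range_self k))
  rw [hνμ, hV0] at h1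
  exact (by norm_num : ¬ (1:ℝ≥0∞) ≤ 0) h1
end

section
/- Let θ ∈ ℝ with θ/(2π) irrational and let f : 𝕋 → 𝕋 be continuous. Define T : 𝕋 × 𝕋 → 𝕋 × 𝕋 by T(z, w) = (e^{iθ}·z, f(z)·w). Then every continuous F : 𝕋 × 𝕋 → ℂ with F∘T = F is constant if and only if, for every nonzero integer n, the only continuous g : 𝕋 → ℂ satisfying g(e^{iθ}·z)·f(z)ⁿ = g(z) for all z ∈ 𝕋 is the zero function. -/
open MeasureTheory AddCircle Filter

noncomputable section AnzaiAux

private instance anzaiFact01 : Fact ((0:ℝ) < 1) := ⟨one_pos⟩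

private lemma circle_coe_pow (z : Circle) (m : ℕ) : ((z ^ m : Circle) : ℂ) = (z : ℂ) ^ m := by
  induction m with
  | zero => simp
  | succ k ih => rw [pow_succ, pow_succ, Circle.coe_mul, ih]

private lemma circle_coe_zpow (z : Circle) (n : ℤ) : ((z ^ n : Circle) : ℂ) = (z : ℂ) ^ n := by
  cases n with
  | ofNat m => simp [circle_coe_pow]
  | negSucc m => simp [zpow_negSucc, Circle.coe_inv, circle_coe_pow]

private lemma toCircle_neg' {T : ℝ} (x : AddCircle T) :
    toCircle (-x) = (toCircle x)⁻¹ := by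
  apply eq_inv_of_mul_eq_one_left
  rw [← toCircle_add, neg_add_cancel, toCircle_zero]

private lemma toCircle_zsmul {T : ℝ} (n : ℤ) (x : AddCircle T) :
    toCircle (n • x) = toCircle x ^ n := by
  induction n using Int.induction_on with
  | zero => simp
  | succ k ih => rw [add_smul, one_smul, toCircle_add, ih, zpow_add_one]
  | pred k ih =>
      rw [sub_smul, one_smul, sub_eq_add_neg, toCircle_add, ih, toCircle_neg', zpow_sub_one]

private lemma fourier_arg_add {T : ℝ} (m : ℤ) (x y : AddCircle T) :
    fourier m (x + y) = fourier m x * fourier m y := by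
  simp only [fourier_apply, smul_add, toCircle_add, Circle.coe_mul]

/-- A continuous function on `AddCircle T` with all Fourier coefficients zero is zero. -/
private lemma fourier_coeffs_zero {T : ℝ} [hT : Fact (0 < T)] (h : C(AddCircle T, ℂ))
    (hc : ∀ n : ℤ, fourierCoeff (⇑h) n = 0) : ∀ x, h x = 0 := by
  have h1 : fourierBasis.repr (ContinuousMap.toLp (E := ℂ) 2 haarAddCircle ℂ h) = 0 := by
    ext n
    rw [fourierBasis_repr, fourierCoeff_toLp]
    simpa using hc n
  have h2 : (ContinuousMap.toLp (E := ℂ) 2 haarAddCircle ℂ h) = 0 := by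
    simpa using fourierBasis.repr.injective (by simpa using h1)
  have h3 : ⇑h =ᵐ[(haarAddCircle : Measure (AddCircle T))] (fun _ => (0:ℂ)) := by
    refine (ContinuousMap.coeFn_toLp (μ := haarAddCircle) (𝕜 := ℂ) (p := 2) h).symm.trans ?_
    rw [h2]
    exact Lp.coeFn_zero ℂ 2 haarAddCircle
  have h4 : ⇑h = fun _ => (0:ℂ) :=
    (Continuous.ae_eq_iff_eq haarAddCircle h.continuous continuous_const).mp h3
  exact fun x => congrFun h4 x

private lemma integrable_fourier_smul {T : ℝ} [hT : Fact (0 < T)]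
    {h : AddCircle T → ℂ} (hh : Continuous h) (n : ℤ) :
    Integrable (fun t : AddCircle T => fourier n t • h t) haarAddCircle :=
  (((fourier n).continuous).smul hh).integrable_of_hasCompactSupport
    (HasCompactSupport.of_compactSpace _)

private lemma fourierCoeff_sub {T : ℝ} [hT : Fact (0 < T)]
    {h₁ h₂ : AddCircle T → ℂ} (hc₁ : Continuous h₁) (hc₂ : Continuous h₂) (n : ℤ) :
    fourierCoeff (fun x => h₁ x - h₂ x) n = fourierCoeff h₁ n - fourierCoeff h₂ n := by
  unfold fourierCoeff
  simp_rw [smul_sub]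
  exact integral_sub (integrable_fourier_smul hc₁ (-n)) (integrable_fourier_smul hc₂ (-n))

private lemma fourierCoeff_const {T : ℝ} [hT : Fact (0 < T)] (c : ℂ) (n : ℤ) :
    fourierCoeff (fun _ : AddCircle T => c) n = if n = 0 then c else 0 := by
  unfold fourierCoeff
  split_ifs with h
  · subst h
    simp only [neg_zero, fourier_zero, one_smul]
    simp [measure_univ]
  · have hn : -n ≠ 0 := neg_ne_zero.mpr h
    simp_rw [smul_eq_mul]
    rw [integral_mul_const]
    have : (∫ t : AddCircle T, fourier (-n) t ∂haarAddCircle) = 0 := by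
      exact integral_eq_zero_of_add_right_eq_neg (μ := haarAddCircle)
        (fourier_add_half_inv_index hn hT.out)
    rw [this, zero_mul]

/-- Translation acts on Fourier coefficients by a phase. -/
private lemma fourierCoeff_translate {T : ℝ} [hT : Fact (0 < T)]
    (h : AddCircle T → ℂ) (a : AddCircle T) (n : ℤ) :
    fourierCoeff (fun x => h (x + a)) n = fourier n a * fourierCoeff h n := by
  unfold fourierCoeff
  have key : (∫ t : AddCircle T, fourier (-n) t • h (t + a) ∂haarAddCircle)
      = ∫ t : AddCircle T, fourier (-n) (t - a) • h t ∂haarAddCircle := by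
    have := integral_add_right_eq_self (μ := (haarAddCircle : Measure (AddCircle T)))
      (fun t : AddCircle T => fourier (-n) (t - a) • h t) a
    rw [← this]
    congr 1
    funext t
    rw [add_sub_cancel_right]
  rw [key]
  have hfe : ∀ t : AddCircle T, fourier (-n) (t - a) = fourier n a * fourier (-n) t := by
    intro t
    rw [sub_eq_add_neg, fourier_arg_add, mul_comm]
    congr 1
    rw [fourier_apply, fourier_apply, neg_smul, smul_neg, neg_neg]
  simp_rw [hfe, mul_smul]
  rw [integral_smul, smul_eq_mul]

/-- The subgroup generated by `θ` and `2π` is dense in `ℝ` when `θ/(2π)` is irrational. -/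
private lemma dense_theta_2pi {θ : ℝ} (hθ : Irrational (θ / (2 * Real.pi))) :
    Dense ((AddSubgroup.closure {θ, 2 * Real.pi} : AddSubgroup ℝ) : Set ℝ) := by
  rcases AddSubgroup.dense_or_cyclic (AddSubgroup.closure {θ, 2 * Real.pi}) with h | ⟨a, ha⟩
  · exact h
  · exfalso
    have hθS : θ ∈ AddSubgroup.closure ({θ, 2 * Real.pi} : Set ℝ) :=
      AddSubgroup.subset_closure (by simp)
    have h2S : 2 * Real.pi ∈ AddSubgroup.closure ({θ, 2 * Real.pi} : Set ℝ) :=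
      AddSubgroup.subset_closure (by simp)
    rw [ha, AddSubgroup.mem_closure_singleton] at hθS h2S
    obtain ⟨m, hm⟩ := hθS
    obtain ⟨k, hk⟩ := h2S
    have h2π : (2 * Real.pi) ≠ 0 := by positivity
    have ha0 : a ≠ 0 := by
      rintro rfl; rw [smul_zero] at hk; exact h2π hk.symm
    have hk0 : (k : ℝ) ≠ 0 := by
      rintro hk0
      rw [zsmul_eq_mul, hk0, zero_mul] at hk
      exact h2π hk.symm
    apply hθ
    refine ⟨(m : ℚ) / (k : ℚ), ?_⟩
    rw [← hm, ← hk, zsmul_eq_mul, zsmul_eq_mul, mul_div_mul_right _ _ ha0]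
    push_cast
    ring

/-- A continuous function on the circle invariant under an irrational rotation is constant. -/
private lemma invariant_rotation_const {θ : ℝ} (hθ : Irrational (θ / (2 * Real.pi)))
    {g : Circle → ℂ} (hg : Continuous g)
    (hinv : ∀ z : Circle, g (Circle.exp θ * z) = g z) : ∀ z, g z = g 1 := by
  set C : Set ℝ := {t : ℝ | ∀ z : Circle, g (Circle.exp t * z) = g z} with hC
  have hmem : ∀ t ∈ AddSubgroup.closure ({θ, 2 * Real.pi} : Set ℝ), t ∈ C := by
    intro t ht
    induction ht using AddSubgroup.closure_induction with
    | mem x hx =>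
        rcases hx with hx | hx
        · subst hx; exact hinv
        · subst hx
          intro z
          have h2 : Circle.exp (2 * Real.pi) = 1 := by
            have := Circle.periodic_exp 0
            simpa using this
          rw [h2, one_mul]
    | zero => intro z; rw [Circle.exp_zero, one_mul]
    | add x y hx hy ihx ihy =>
        intro z
        rw [Circle.exp_add, mul_assoc, ihx, ihy]
    | neg x hx ihx =>
        intro z
        have h := ihx (Circle.exp (-x) * z)
        rw [← mul_assoc, ← Circle.exp_add, add_neg_cancel, Circle.exp_zero, one_mul] at h
        exact h.symm
  have hclosed : IsClosed C := by
    have : C = ⋂ z : Circle, {t : ℝ | g (Circle.exp t * z) = g z} := by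
      ext t; simp [hC, Set.mem_iInter]
    rw [this]
    refine isClosed_iInter fun z => isClosed_eq ?_ continuous_const
    exact hg.comp ((Circle.exp.continuous.comp continuous_id).mul continuous_const)
  have hall : ∀ t : ℝ, t ∈ C := by
    have hsub : (AddSubgroup.closure ({θ, 2 * Real.pi} : Set ℝ) : Set ℝ) ⊆ C := hmem
    have hdense := dense_theta_2pi hθ
    have : closure ((AddSubgroup.closure ({θ, 2 * Real.pi} : Set ℝ) : AddSubgroup ℝ) : Set ℝ) ⊆ C :=
      closure_minimal hsub hclosed
    intro t
    exact this (hdense t)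
  intro z
  obtain ⟨t, ht⟩ : ∃ t : ℝ, Circle.exp t = z := ⟨Complex.arg z, Circle.exp_arg z⟩
  have := hall t 1
  rw [mul_one, ht] at this
  exact this

end AnzaiAux

/-- For θ with θ/(2π) irrational and continuous `f : 𝕋 → 𝕋`, the classical Anzai skew-product
`T(z,w) = (e^{iθ}z, f(z)w)` on `𝕋 × 𝕋` has only constant continuous invariant functions if and
only if for every nonzero integer `n` the cohomological equation `g(e^{iθ}z)·f(z)ⁿ = g(z)` has
no nonzero continuous solution. -/
theorem stmt13 (θ : ℝ) (hθ : Irrational (θ / (2 * Real.pi)))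
    (f : Circle → Circle) (hf : Continuous f) :
    (∀ F : Circle × Circle → ℂ, Continuous F →
        (∀ p : Circle × Circle, F (Circle.exp θ * p.1, f p.1 * p.2) = F p) →
        ∃ c : ℂ, ∀ p, F p = c) ↔
      (∀ n : ℤ, n ≠ 0 → ∀ g : Circle → ℂ, Continuous g →
        (∀ z : Circle, g (Circle.exp θ * z) * (f z : ℂ) ^ n = g z) → ∀ z, g z = 0) := by
  constructor
  · -- forward direction
    intro hLHS n hn g hg hrel z
    set F : Circle × Circle → ℂ := fun p => g p.1 * (p.2 : ℂ) ^ n with hF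
    have hFc : Continuous F := by
      apply (hg.comp continuous_fst).mul
      exact (continuous_subtype_val.comp continuous_snd).zpow₀ n
        fun p => Or.inl (Circle.coe_ne_zero p.2)
    have hFinv : ∀ p : Circle × Circle, F (Circle.exp θ * p.1, f p.1 * p.2) = F p := by
      intro p
      simp only [hF, Circle.coe_mul]
      rw [mul_zpow, ← mul_assoc, hrel p.1]
    obtain ⟨c, hc⟩ := hLHS F hFc hFinv
    have h1 : g z = c := by
      have := hc (z, 1)
      simp only [hF] at this
      simpa using this
    have h2 : g z * ((Circle.exp (Real.pi / n) : ℂ)) ^ n = c := by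
      have := hc (z, Circle.exp (Real.pi / n))
      simpa only [hF] using this
    have hm1 : ((Circle.exp (Real.pi / n) : ℂ)) ^ n = -1 := by
      rw [Circle.coe_exp]
      rw [← Complex.exp_int_mul]
      have : (n : ℂ) * (↑(Real.pi / n) * Complex.I) = Real.pi * Complex.I := by
        push_cast
        have hnC : (n : ℂ) ≠ 0 := Int.cast_ne_zero.mpr hn
        field_simp
      rw [this, Complex.exp_pi_mul_I]
    rw [hm1] at h2
    -- g z = c and -g z = c
    linear_combination (h1 - h2) / 2
  · -- reverse direction
    intro hRHS F hF hFinv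
    -- bound for F
    obtain ⟨C, hC⟩ := isCompact_univ.exists_bound_of_continuousOn hF.continuousOn
    -- surjectivity of toCircle on AddCircle 1
    have hsurj : Function.Surjective (toCircle : AddCircle (1:ℝ) → Circle) := by
      intro w
      refine ⟨(homeomorphCircle one_ne_zero).symm w, ?_⟩
      rw [← homeomorphCircle_apply one_ne_zero, Homeomorph.apply_symm_apply]
    -- Fourier coefficients in the second variable
    set g : ℤ → Circle → ℂ :=
      fun n z => fourierCoeff (fun y : AddCircle (1:ℝ) => F (z, toCircle y)) n with hgdef
    have hgcont : ∀ n : ℤ, Continuous (g n) := by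
      intro n
      apply continuous_of_dominated (bound := fun _ => C)
      · intro z
        exact (((fourier (-n)).continuous).smul
          (hF.comp (continuous_const.prodMk continuous_toCircle))).aestronglyMeasurable
      · intro z
        refine Eventually.of_forall fun y => ?_
        rw [norm_smul]
        have h1 : ‖(fourier (-n)) y‖ = 1 := by
          simp [fourier_apply, Circle.norm_coe]
        rw [h1, one_mul]
        exact hC _ (Set.mem_univ _)
      · exact integrable_const C
      · refine Eventually.of_forall fun y => ?_
        exact Continuous.smul (continuous_const : Continuous fun _ : Circle => (fourier (-n) y : ℂ))
          (hF.comp ((continuous_id.prodMk continuous_const)))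
    have hrel : ∀ (n : ℤ) (z : Circle),
        g n (Circle.exp θ * z) * ((f z : ℂ)) ^ n = g n z := by
      intro n z
      obtain ⟨a, ha⟩ := hsurj (f z)
      have h1 : ∀ y : AddCircle (1:ℝ),
          F (Circle.exp θ * z, toCircle y) = F (z, toCircle (y + -a)) := by
        intro y
        have h := hFinv (z, toCircle (y + -a))
        simp only at h
        rw [← h]
        congr 2
        rw [← ha, ← toCircle_add]
        congr 1
        abel
      have h2 : g n (Circle.exp θ * z)
          = fourierCoeff (fun y : AddCircle (1:ℝ) => F (z, toCircle (y + -a))) n := by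
        simp only [hgdef]
        congr 1
        funext y
        exact h1 y
      have h3 : fourierCoeff (fun y : AddCircle (1:ℝ) => F (z, toCircle (y + -a))) n
          = fourier n (-a) * g n z := by
        exact fourierCoeff_translate (fun y : AddCircle (1:ℝ) => F (z, toCircle y)) (-a) n
      have hfz : ((f z : Circle) : ℂ) ^ n = fourier n a := by
        rw [← ha, fourier_apply, _root_.toCircle_zsmul, circle_coe_zpow]
      rw [h2, h3, hfz]
      have h4 : (fourier n (-a) : ℂ) * fourier n a = 1 := by
        rw [← fourier_arg_add, neg_add_cancel]
        exact fourier_eval_zero n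
      calc fourier n (-a) * g n z * fourier n a
          = (fourier n (-a) * fourier n a) * g n z := by ring
        _ = g n z := by rw [h4, one_mul]
    have hzero : ∀ n : ℤ, n ≠ 0 → ∀ z, g n z = 0 := by
      intro n hn
      exact hRHS n hn (g n) (hgcont n) (hrel n)
    have hg0 : ∀ z, g 0 z = g 0 1 := by
      apply invariant_rotation_const hθ (hgcont 0)
      intro z
      have := hrel 0 z
      simpa using this
    refine ⟨g 0 1, fun p => ?_⟩
    obtain ⟨z, w⟩ := p
    obtain ⟨y, rfl⟩ := hsurj w
    set c : ℂ := g 0 1 with hc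
    have hFzc : Continuous fun y' : AddCircle (1:ℝ) => F (z, toCircle y') :=
      hF.comp (continuous_const.prodMk continuous_toCircle)
    have hcoeffs : ∀ n : ℤ,
        fourierCoeff (fun y' : AddCircle (1:ℝ) => F (z, toCircle y') - c) n = 0 := by
      intro n
      rw [fourierCoeff_sub hFzc continuous_const, fourierCoeff_const]
      by_cases hn : n = 0
      · subst hn
        rw [show fourierCoeff (fun y' : AddCircle (1:ℝ) => F (z, toCircle y')) 0 = g 0 z from rfl,
          hg0 z]
        simp
      · rw [if_neg hn]
        rw [show fourierCoeff (fun y' : AddCircle (1:ℝ) => F (z, toCircle y')) n = g n z from rfl,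
          hzero n hn z]
        ring
    have := fourier_coeffs_zero ⟨fun y' : AddCircle (1:ℝ) => F (z, toCircle y') - c,
      hFzc.sub continuous_const⟩ hcoeffs y
    simp only [ContinuousMap.coe_mk] at this
    exact sub_eq_zero.mp this
end
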